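/- arXiv:0909.4350 — 3 statements merged into one kernel-verified Lean document; each statement's English description precedes it below -/
import Mathlib

section
/- Assume (A1) and (A2). Then there exist δ₀ > 0, ε₀ > 0, a continuous map β : closure(V) × [0, ε₀] → ℝⁿ⁻ᵏ with β(α, 0) = β₀(α), and a bounded map μ : closure(V) × (0, ε₀] → ℝⁿ⁻ᵏ such that: (i) π⊥F(S(α, β(α,ε)), ε) = 0 for all α ∈ closure(V) and ε ∈ [0, ε₀]; (ii) β(α,ε) = β₀(α) + εμ(α,ε) for all α ∈ closure(V) and ε ∈ (0, ε₀]; (iii) for each α ∈ closure(V) and ε ∈ [0, ε₀], β(α,ε) is the unique b ∈ B_{δ₀}(β₀(α)) with π⊥F(S(α, b), ε) = 0. -/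
open scoped Topology

open scoped NNReal
open Metric

/-- Banach fixed point in a closed ball. -/
theorem fixedPt_closedBall' {E : Type*} [NormedAddCommGroup E] [NormedSpace ℝ E] [CompleteSpace E]
    (Φ : E → E) (c : E) (r : ℝ) (hr : 0 ≤ r)
    (hmap : ∀ b ∈ closedBall c r, Φ b ∈ closedBall c r)
    (hcontr : ∀ b₁ ∈ closedBall c r, ∀ b₂ ∈ closedBall c r,
      dist (Φ b₁) (Φ b₂) ≤ (1/2) * dist b₁ b₂) :
    ∃ b ∈ closedBall c r, Φ b = b := by
  have hcl : IsClosed (closedBall c r) := isClosed_closedBall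
  haveI : CompleteSpace (closedBall c r) := hcl.completeSpace_coe
  haveI : Nonempty (closedBall c r) := ⟨⟨c, mem_closedBall_self hr⟩⟩
  set φ : closedBall c r → closedBall c r := fun x => ⟨Φ x, hmap _ x.2⟩ with hφ
  have hlip : LipschitzWith (1/2 : ℝ≥0) φ := by
    apply LipschitzWith.of_dist_le_mul
    intro x y
    have := hcontr x x.2 y y.2
    simpa [Subtype.dist_eq, hφ] using this
  have hc : ContractingWith (1/2 : ℝ≥0) φ := ⟨by rw [← NNReal.coe_lt_coe]; norm_num, hlip⟩
  obtain ⟨y, hy⟩ := hc.exists_fixedPoint (Classical.arbitrary _) (edist_ne_top _ _)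
  exact ⟨y.1, y.2, congrArg Subtype.val hy.1⟩

/-- Projection of `ℝⁿ` onto the first `k` coordinates. -/
def proj1 {n : ℕ} (k : ℕ) (hk : k ≤ n) (z : Fin n → ℝ) : Fin k → ℝ :=
  fun i => z (Fin.castLE hk i)

/-- Projection of `ℝⁿ` onto the last `n - k` coordinates. -/
def proj2 {n : ℕ} (k : ℕ) (_hk : k ≤ n) (z : Fin n → ℝ) : Fin (n - k) → ℝ :=
  fun i => z ⟨k + (i : ℕ), by have := i.isLt; omega⟩

/-- The vector of `ℝⁿ` with first `k` coordinates `a` and last `n - k` coordinates `b`. -/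
def embed {n : ℕ} (k : ℕ) (_hk : k ≤ n) (a : Fin k → ℝ) (b : Fin (n - k) → ℝ) :
    Fin n → ℝ :=
  fun i => if h : (i : ℕ) < k then a ⟨(i : ℕ), h⟩
    else b ⟨(i : ℕ) - k, by have := i.isLt; omega⟩

set_option maxHeartbeats 2000000
theorem stmt2
    (n k : ℕ) (hn : 1 ≤ n) (hk1 : 1 ≤ k) (hkn : k ≤ n)
    (P : (Fin n → ℝ) → (Fin n → ℝ)) (hP : ContDiff ℝ 1 P)
    (Q : (Fin n → ℝ) → ℝ → (Fin n → ℝ))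
    (hQcont : ContinuousOn (fun p : (Fin n → ℝ) × ℝ => Q p.1 p.2)
      (Set.univ ×ˢ Set.Icc 0 1))
    (hQlip : ∀ K : Set ((Fin n → ℝ) × ℝ), IsCompact K → K ⊆ Set.univ ×ˢ Set.Icc 0 1 →
      ∃ L > 0, ∀ z₁ z₂ : Fin n → ℝ, ∀ e : ℝ, (z₁, e) ∈ K → (z₂, e) ∈ K →
        ‖Q z₁ e - Q z₂ e‖ ≤ L * ‖z₁ - z₂‖)
    (F : (Fin n → ℝ) → ℝ → (Fin n → ℝ))
    (hF : ∀ z e, F z e = P z + e • Q z e)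
    -- (A1)
    (S : Matrix (Fin n) (Fin n) ℝ) (hS : IsUnit S)
    (V : Set (Fin k → ℝ)) (cV : Fin k → ℝ) (rV : ℝ) (hrV : 0 < rV)
    (hV : V = Metric.ball cV rV)
    (β₀ : (Fin k → ℝ) → (Fin (n - k) → ℝ)) (hβ₀ : ContDiffOn ℝ 1 β₀ (closure V))
    (Z : Set (Fin n → ℝ))
    (hZ : Z = (fun α => S.mulVec (embed k hkn α (β₀ α))) '' closure V)
    (hPZ : ∀ z ∈ Z, P z = 0)
    -- (A2)
    (hA2zero : ∀ z ∈ Z, ∀ b : Fin (n - k) → ℝ,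
      proj1 k hkn (fderiv ℝ P z (S.mulVec (embed k hkn 0 b))) = 0)
    (hA2inv : ∀ z ∈ Z, Function.Bijective
      (fun b : Fin (n - k) → ℝ => proj2 k hkn (fderiv ℝ P z (S.mulVec (embed k hkn 0 b))))) :
    -- conclusion: the Lipschitz Lyapunov–Schmidt reduction
    ∃ δ₀ > 0, ∃ ε₀ > 0, ∃ β : (Fin k → ℝ) → ℝ → (Fin (n - k) → ℝ),
      ∃ μ : (Fin k → ℝ) → ℝ → (Fin (n - k) → ℝ),
      ContinuousOn (fun p : (Fin k → ℝ) × ℝ => β p.1 p.2)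
        (closure V ×ˢ Set.Icc 0 ε₀) ∧
      (∀ α ∈ closure V, β α 0 = β₀ α) ∧
      (∃ C : ℝ, ∀ α ∈ closure V, ∀ e ∈ Set.Ioc (0 : ℝ) ε₀, ‖μ α e‖ ≤ C) ∧
      -- (i)
      (∀ α ∈ closure V, ∀ e ∈ Set.Icc (0 : ℝ) ε₀,
        proj2 k hkn (F (S.mulVec (embed k hkn α (β α e))) e) = 0) ∧
      -- (ii)
      (∀ α ∈ closure V, ∀ e ∈ Set.Ioc (0 : ℝ) ε₀, β α e = β₀ α + e • μ α e) ∧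
      -- (iii)
      (∀ α ∈ closure V, ∀ e ∈ Set.Icc (0 : ℝ) ε₀,
        ∀ b ∈ Metric.ball (β₀ α) δ₀,
          proj2 k hkn (F (S.mulVec (embed k hkn α b)) e) = 0 → b = β α e) := by
  classical
  set A : Set (Fin k → ℝ) := closure V with hAdef
  have hAcb : A = Metric.closedBall cV rV := by rw [hAdef, hV]; exact closure_ball cV hrV.ne'
  have hAcomp : IsCompact A := by rw [hAcb]; exact isCompact_closedBall cV rV
  -- linear algebra setup
  set Pl : (Fin n → ℝ) →L[ℝ] (Fin (n-k) → ℝ) :=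
    ContinuousLinearMap.pi (fun i => ContinuousLinearMap.proj (R := ℝ) (φ := fun _ : Fin n => ℝ)
      ⟨k + (i : ℕ), by have := i.isLt; omega⟩) with hPldef
  have hPl : ∀ z, Pl z = proj2 k hkn z := fun z => rfl
  set embL : (Fin (n-k) → ℝ) →ₗ[ℝ] (Fin n → ℝ) :=
    { toFun := fun b => embed k hkn 0 b
      map_add' := by
        intro b b'; funext i; by_cases h : (i : ℕ) < k <;> simp [embed, h]
      map_smul' := by
        intro c b; funext i; by_cases h : (i : ℕ) < k <;> simp [embed, h] } with hembLdef
  set El : (Fin (n-k) → ℝ) →L[ℝ] (Fin n → ℝ) :=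
    LinearMap.toContinuousLinearMap (S.mulVecLin.comp embL) with hEldef
  have hEl : ∀ b, El b = S.mulVec (embed k hkn 0 b) := fun b => rfl
  set caff : (Fin k → ℝ) → (Fin n → ℝ) := fun α => S.mulVec (embed k hkn α 0) with hcaffdef
  have hsplit : ∀ (α : Fin k → ℝ) (b : Fin (n-k) → ℝ),
      S.mulVec (embed k hkn α b) = caff α + El b := by
    intro α b
    have hdec : embed k hkn α b = embed k hkn α 0 + embed k hkn 0 b := by
      funext i; by_cases h : (i : ℕ) < k <;> simp [embed, h]
    rw [hEl, hcaffdef, hdec, Matrix.mulVec_add]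
  have hcaff : Continuous caff := by
    have h1 : Continuous (fun α : Fin k → ℝ => embed k hkn α 0) := by
      apply continuous_pi
      intro i
      by_cases h : (i : ℕ) < k
      · simpa only [embed, dif_pos h] using continuous_apply _
      · simpa only [embed, dif_neg h] using continuous_const
    exact (LinearMap.toContinuousLinearMap S.mulVecLin).continuous.comp h1
  set z₀ : (Fin k → ℝ) → (Fin n → ℝ) := fun α => caff α + El (β₀ α) with hz₀def
  have hz₀ : ∀ α, S.mulVec (embed k hkn α (β₀ α)) = z₀ α := fun α => hsplit α (β₀ α)
  have hβ₀c : ContinuousOn β₀ A := hβ₀.continuousOn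
  have hz₀c : ContinuousOn z₀ A := (hcaff.continuousOn).add (El.continuous.comp_continuousOn hβ₀c)
  have hz₀Z : ∀ α ∈ A, z₀ α ∈ Z := by
    intro α hα; rw [hZ]; exact ⟨α, hα, hz₀ α⟩
  have hDPc : Continuous (fderiv ℝ P) := hP.continuous_fderiv one_ne_zero
  set T : (Fin k → ℝ) → (Fin (n-k) → ℝ) →L[ℝ] (Fin (n-k) → ℝ) :=
    fun α => Pl.comp ((fderiv ℝ P (z₀ α)).comp El) with hTdef
  have hTapp : ∀ α b, T α b = proj2 k hkn (fderiv ℝ P (z₀ α) (S.mulVec (embed k hkn 0 b))) :=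
    fun α b => rfl
  have hTunit : ∀ α ∈ A, IsUnit (T α) := by
    intro α hα
    have hbij0 := hA2inv (z₀ α) (hz₀Z α hα)
    have hbij : Function.Bijective (T α) := by
      have : (fun b : Fin (n-k) → ℝ =>
          proj2 k hkn (fderiv ℝ P (z₀ α) (S.mulVec (embed k hkn 0 b)))) = ⇑(T α) := by
        funext b; exact (hTapp α b).symm
      rwa [this] at hbij0
    set e : (Fin (n-k) → ℝ) ≃L[ℝ] (Fin (n-k) → ℝ) :=
      LinearEquiv.toContinuousLinearEquiv
        (LinearEquiv.ofBijective (↑(T α) : (Fin (n-k) → ℝ) →ₗ[ℝ] _) hbij) with he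
    have happ : ∀ y, T α y = e y := fun y => rfl
    refine ⟨⟨T α, (e.symm : (Fin (n-k) → ℝ) →L[ℝ] (Fin (n-k) → ℝ)), ?_, ?_⟩, rfl⟩
    · refine ContinuousLinearMap.ext fun x => ?_
      show T α (e.symm x) = x
      rw [happ]; exact e.apply_symm_apply x
    · refine ContinuousLinearMap.ext fun x => ?_
      show e.symm (T α x) = x
      rw [happ]; exact e.symm_apply_apply x
  set M : (Fin k → ℝ) → (Fin (n-k) → ℝ) →L[ℝ] (Fin (n-k) → ℝ) :=
    fun α => Ring.inverse (T α) with hMdef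
  have hMT : ∀ α ∈ A, ∀ x, M α (T α x) = x := by
    intro α hα x
    have h := Ring.inverse_mul_cancel (T α) (hTunit α hα)
    calc M α (T α x) = (Ring.inverse (T α) * T α) x := rfl
    _ = x := by rw [h]; rfl
  have hTM : ∀ α ∈ A, ∀ x, T α (M α x) = x := by
    intro α hα x
    have h := Ring.mul_inverse_cancel (T α) (hTunit α hα)
    calc T α (M α x) = (T α * Ring.inverse (T α)) x := rfl
    _ = x := by rw [h]; rfl
  have hTc : ContinuousOn T A := by
    apply ContinuousOn.clm_comp continuousOn_const
    exact ContinuousOn.clm_comp (hDPc.comp_continuousOn hz₀c) continuousOn_const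
  have hMc : ContinuousOn M A := by
    intro α hα
    obtain ⟨u, hu⟩ := hTunit α hα
    have h1 : ContinuousAt Ring.inverse (T α) := hu ▸ NormedRing.inverse_continuousAt u
    exact h1.comp_continuousWithinAt (hTc α hα)
  obtain ⟨CM₀, hCM₀⟩ := hAcomp.exists_bound_of_continuousOn hMc
  set CM : ℝ := max CM₀ 1 with hCMdef
  have hCM1 : (1:ℝ) ≤ CM := le_max_right _ _
  have hCMpos : (0:ℝ) < CM := lt_of_lt_of_le one_pos hCM1
  have hCM : ∀ α ∈ A, ‖M α‖ ≤ CM := fun α hα => le_trans (hCM₀ α hα) (le_max_left _ _)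
  -- compact neighborhoods
  have hzsetc : IsCompact (z₀ '' A) := hAcomp.image_of_continuousOn hz₀c
  set K₁ : Set (Fin n → ℝ) := Metric.cthickening 1 (z₀ '' A) with hK₁def
  have hK₁comp : IsCompact K₁ := hzsetc.cthickening
  have hK₁mem : ∀ α ∈ A, ∀ x : Fin n → ℝ, dist x (z₀ α) ≤ 1 → x ∈ K₁ := by
    intro α hα x h
    exact Metric.mem_cthickening_of_dist_le x (z₀ α) 1 _ ⟨α, hα, rfl⟩ h
  have hz₀K₁ : ∀ α ∈ A, z₀ α ∈ K₁ := fun α hα =>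
    hK₁mem α hα (z₀ α) (by simp)
  set CP : ℝ := ‖Pl‖ + 1 with hCPdef
  set CE : ℝ := ‖El‖ + 1 with hCEdef
  have hCPpos : (0:ℝ) < CP := by positivity
  have hCEpos : (0:ℝ) < CE := by positivity
  have hPlle : ‖Pl‖ ≤ CP := by simp [hCPdef]
  have hElle : ‖El‖ ≤ CE := by simp [hCEdef]
  -- uniform continuity of fderiv P on K₁
  have hUC := Metric.uniformContinuousOn_iff.1
    (hK₁comp.uniformContinuousOn_of_continuous hDPc.continuousOn)
  set η : ℝ := 1 / (4 * CM * CP * CE) with hηdef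
  have hηpos : 0 < η := by rw [hηdef]; positivity
  obtain ⟨δa, hδapos, hδaP⟩ := hUC η hηpos
  set δ₁ : ℝ := min (δa / (2 * CE)) (1 / CE) with hδ₁def
  have hδ₁pos : 0 < δ₁ := by
    rw [hδ₁def]; apply lt_min <;> positivity
  -- Q : Lipschitz and bound on K₁ × [0,1]
  set KQ : Set ((Fin n → ℝ) × ℝ) := K₁ ×ˢ Set.Icc (0:ℝ) 1 with hKQdef
  have hKQcomp : IsCompact KQ := hK₁comp.prod isCompact_Icc
  have hKQsub : KQ ⊆ Set.univ ×ˢ Set.Icc 0 1 :=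
    Set.prod_mono (Set.subset_univ _) subset_rfl
  obtain ⟨L, hLpos, hLip⟩ := hQlip KQ hKQcomp hKQsub
  obtain ⟨CQ₀, hCQ₀⟩ := hKQcomp.exists_bound_of_continuousOn (hQcont.mono hKQsub)
  set CQ : ℝ := max CQ₀ 0 with hCQdef
  have hCQ0 : (0:ℝ) ≤ CQ := le_max_right _ _
  have hCQ : ∀ x ∈ K₁, ∀ e ∈ Set.Icc (0:ℝ) 1, ‖Q x e‖ ≤ CQ := by
    intro x hx e he
    exact le_trans (hCQ₀ (x, e) ⟨hx, he⟩) (le_max_left _ _)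
  -- ε₀
  set ε₀ : ℝ := min 1 (min (1 / (4 * CM * CP * CE * L)) (δ₁ / (4 * (CM * CP * (CQ+1)))))
    with hε₀def
  have hε₀pos : 0 < ε₀ := by
    rw [hε₀def]; refine lt_min one_pos (lt_min ?_ ?_) <;> positivity
  have hε₀le1 : ε₀ ≤ 1 := min_le_left _ _
  have hε₀L : ε₀ * (CM * CP * CE * L) ≤ 1/4 := by
    have h1 : ε₀ ≤ 1 / (4 * CM * CP * CE * L) :=
      le_trans (min_le_right _ _) (min_le_left _ _)
    have h2 : (0:ℝ) < CM * CP * CE * L := by positivity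
    calc ε₀ * (CM * CP * CE * L) ≤ (1 / (4 * CM * CP * CE * L)) * (CM * CP * CE * L) := by
          exact mul_le_mul_of_nonneg_right h1 h2.le
    _ = 1/4 := by field_simp
  have hε₀B : ε₀ * (CM * CP * (CQ+1)) ≤ δ₁/4 := by
    have h1 : ε₀ ≤ δ₁ / (4 * (CM * CP * (CQ+1))) :=
      le_trans (min_le_right _ _) (min_le_right _ _)
    have h2 : (0:ℝ) < CM * CP * (CQ+1) := by positivity
    calc ε₀ * (CM * CP * (CQ+1)) ≤ (δ₁ / (4 * (CM * CP * (CQ+1)))) * (CM * CP * (CQ+1)) :=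
          mul_le_mul_of_nonneg_right h1 h2.le
    _ = δ₁/4 := by field_simp
  -- the reduced map
  set G : (Fin k → ℝ) → (Fin (n-k) → ℝ) → ℝ → (Fin (n-k) → ℝ) :=
    fun α b e => Pl (P (caff α + El b)) + e • Pl (Q (caff α + El b) e) with hGdef
  have hGF : ∀ α b e, proj2 k hkn (F (S.mulVec (embed k hkn α b)) e) = G α b e := by
    intro α b e
    rw [← hPl, hsplit, hF]
    simp [hGdef, map_add, map_smul]
  set Φ : (Fin k → ℝ) → ℝ → (Fin (n-k) → ℝ) → (Fin (n-k) → ℝ) :=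
    fun α e b => b - M α (G α b e) with hΦdef
  have hfixiff : ∀ α ∈ A, ∀ e b, Φ α e b = b ↔ G α b e = 0 := by
    intro α hα e b
    constructor
    · intro h
      have h2 : M α (G α b e) = 0 := by
        have := h
        rw [hΦdef] at this
        simpa [sub_eq_self] using this
      have := hTM α hα (G α b e)
      rw [h2, map_zero] at this
      exact this.symm
    · intro h; rw [hΦdef]; simp [h]
  -- membership of x points
  have hxK : ∀ α ∈ A, ∀ b : Fin (n-k) → ℝ, ‖b - β₀ α‖ ≤ δ₁ →
      (caff α + El b) ∈ K₁ ∧ dist (caff α + El b) (z₀ α) < δa := by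
    intro α hα b hb
    have hdist : dist (caff α + El b) (z₀ α) ≤ ‖El‖ * δ₁ := by
      rw [hz₀def]
      have : caff α + El b - (caff α + El (β₀ α)) = El (b - β₀ α) := by
        rw [map_sub]; abel
      rw [dist_eq_norm, this]
      calc ‖El (b - β₀ α)‖ ≤ ‖El‖ * ‖b - β₀ α‖ := El.le_opNorm _
      _ ≤ ‖El‖ * δ₁ := mul_le_mul_of_nonneg_left hb (norm_nonneg _)
    have hEδ : ‖El‖ * δ₁ ≤ CE * δ₁ := mul_le_mul_of_nonneg_right hElle hδ₁pos.le
    have h1 : CE * δ₁ ≤ δa / 2 := by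
      have : δ₁ ≤ δa / (2 * CE) := min_le_left _ _
      calc CE * δ₁ ≤ CE * (δa / (2 * CE)) := mul_le_mul_of_nonneg_left this hCEpos.le
      _ = δa / 2 := by field_simp
    have h2 : CE * δ₁ ≤ 1 := by
      have : δ₁ ≤ 1 / CE := min_le_right _ _
      calc CE * δ₁ ≤ CE * (1 / CE) := mul_le_mul_of_nonneg_left this hCEpos.le
      _ = 1 := by field_simp
    constructor
    · exact hK₁mem α hα _ (le_trans hdist (le_trans hEδ h2))
    · exact lt_of_le_of_lt (le_trans hdist (le_trans hEδ h1)) (by linarith)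
  -- mean value estimate and contraction
  have hcontr : ∀ α ∈ A, ∀ e ∈ Set.Icc (0:ℝ) ε₀, ∀ b₁ ∈ closedBall (β₀ α) δ₁,
      ∀ b₂ ∈ closedBall (β₀ α) δ₁, ‖Φ α e b₁ - Φ α e b₂‖ ≤ (1/2) * ‖b₁ - b₂‖ := by
    intro α hα e he b₁ hb₁ b₂ hb₂
    have hb₁' : ‖b₁ - β₀ α‖ ≤ δ₁ := mem_closedBall_iff_norm.1 hb₁
    have hb₂' : ‖b₂ - β₀ α‖ ≤ δ₁ := mem_closedBall_iff_norm.1 hb₂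
    obtain ⟨hx₁K, hx₁d⟩ := hxK α hα b₁ hb₁'
    obtain ⟨hx₂K, hx₂d⟩ := hxK α hα b₂ hb₂'
    set g : (Fin (n-k) → ℝ) → (Fin (n-k) → ℝ) :=
      fun b => Pl (P (caff α + El b)) - T α b with hgdef
    set g' : (Fin (n-k) → ℝ) → ((Fin (n-k) → ℝ) →L[ℝ] (Fin (n-k) → ℝ)) :=
      fun b => Pl.comp ((fderiv ℝ P (caff α + El b)).comp El) - T α with hg'def
    have hgderiv : ∀ b ∈ closedBall (β₀ α) δ₁,
        HasFDerivWithinAt g (g' b) (closedBall (β₀ α) δ₁) b := by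
      intro b hb
      have h1 : HasFDerivAt (fun b : Fin (n-k) → ℝ => caff α + El b) El b :=
        (El.hasFDerivAt).const_add (caff α)
      have h2 : HasFDerivAt P (fderiv ℝ P (caff α + El b)) (caff α + El b) :=
        (hP.differentiable one_ne_zero _).hasFDerivAt
      have h3 : HasFDerivAt (fun b : Fin (n-k) → ℝ => Pl (P (caff α + El b)))
          (Pl.comp ((fderiv ℝ P (caff α + El b)).comp El)) b :=
        Pl.hasFDerivAt.comp _ (h2.comp b h1)
      exact (h3.sub (T α).hasFDerivAt).hasFDerivWithinAt
    have hg'bound : ∀ b ∈ closedBall (β₀ α) δ₁, ‖g' b‖ ≤ CP * (η * CE) := by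
      intro b hb
      have hbn : ‖b - β₀ α‖ ≤ δ₁ := mem_closedBall_iff_norm.1 hb
      obtain ⟨hxK', hxd'⟩ := hxK α hα b hbn
      have hDd : ‖fderiv ℝ P (caff α + El b) - fderiv ℝ P (z₀ α)‖ ≤ η := by
        rw [← dist_eq_norm]
        exact (hδaP _ hxK' _ (hz₀K₁ α hα) hxd').le
      have heq : g' b = Pl.comp
          (((fderiv ℝ P (caff α + El b)) - (fderiv ℝ P (z₀ α))).comp El) := by
        refine ContinuousLinearMap.ext fun v => ?_
        simp only [hg'def, hTdef, ContinuousLinearMap.sub_apply,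
          ContinuousLinearMap.comp_apply, map_sub]
      rw [heq]
      calc ‖Pl.comp (((fderiv ℝ P (caff α + El b)) - (fderiv ℝ P (z₀ α))).comp El)‖
          ≤ ‖Pl‖ * ‖((fderiv ℝ P (caff α + El b)) - (fderiv ℝ P (z₀ α))).comp El‖ :=
            ContinuousLinearMap.opNorm_comp_le _ _
      _ ≤ ‖Pl‖ * (‖(fderiv ℝ P (caff α + El b)) - (fderiv ℝ P (z₀ α))‖ * ‖El‖) := by
            exact mul_le_mul_of_nonneg_left (ContinuousLinearMap.opNorm_comp_le _ _)
              (norm_nonneg _)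
      _ ≤ CP * (η * CE) := by
            apply mul_le_mul hPlle _ (by positivity) hCPpos.le
            exact mul_le_mul hDd hElle (norm_nonneg _) hηpos.le
    have hMV : ‖g b₁ - g b₂‖ ≤ (CP * (η * CE)) * ‖b₁ - b₂‖ :=
      Convex.norm_image_sub_le_of_norm_hasFDerivWithin_le hgderiv hg'bound
        (convex_closedBall _ _) hb₂ hb₁
    have he01 : e ∈ Set.Icc (0:ℝ) 1 := ⟨he.1, le_trans he.2 hε₀le1⟩
    have hQl : ‖Q (caff α + El b₁) e - Q (caff α + El b₂) e‖
        ≤ L * ‖(caff α + El b₁) - (caff α + El b₂)‖ :=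
      hLip _ _ e ⟨hx₁K, he01⟩ ⟨hx₂K, he01⟩
    have hxx : ‖(caff α + El b₁) - (caff α + El b₂)‖ ≤ CE * ‖b₁ - b₂‖ := by
      have hxeq : (caff α + El b₁) - (caff α + El b₂) = El (b₁ - b₂) := by
        rw [map_sub]; abel
      rw [hxeq]
      calc ‖El (b₁ - b₂)‖ ≤ ‖El‖ * ‖b₁ - b₂‖ := El.le_opNorm _
      _ ≤ CE * ‖b₁ - b₂‖ := mul_le_mul_of_nonneg_right hElle (norm_nonneg _)
    have hkey : Φ α e b₁ - Φ α e b₂ =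
        -(M α (g b₁ - g b₂))
          - e • (M α (Pl (Q (caff α + El b₁) e) - Pl (Q (caff α + El b₂) e))) := by
      have hG12 : G α b₁ e - G α b₂ e = (g b₁ - g b₂) + T α (b₁ - b₂)
          + e • (Pl (Q (caff α + El b₁) e) - Pl (Q (caff α + El b₂) e)) := by
        simp only [hGdef, hgdef, map_sub, smul_sub]; abel
      have hΦ12 : Φ α e b₁ - Φ α e b₂ = (b₁ - b₂) - M α (G α b₁ e - G α b₂ e) := by
        simp only [hΦdef, map_sub]; abel
      rw [hΦ12, hG12, map_add, map_add, map_smul, hMT α hα (b₁ - b₂)]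
      abel
    have n1 : ‖M α (g b₁ - g b₂)‖ ≤ (1/4) * ‖b₁ - b₂‖ := by
      have h1 : ‖M α (g b₁ - g b₂)‖ ≤ CM * ((CP * (η * CE)) * ‖b₁ - b₂‖) := by
        calc ‖M α (g b₁ - g b₂)‖ ≤ ‖M α‖ * ‖g b₁ - g b₂‖ := (M α).le_opNorm _
        _ ≤ CM * ((CP * (η * CE)) * ‖b₁ - b₂‖) :=
          mul_le_mul (hCM α hα) hMV (norm_nonneg _) hCMpos.le
      have hηeq : CM * (CP * (η * CE)) = 1/4 := by
        rw [hηdef]; field_simp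
      calc ‖M α (g b₁ - g b₂)‖ ≤ CM * ((CP * (η * CE)) * ‖b₁ - b₂‖) := h1
      _ = (CM * (CP * (η * CE))) * ‖b₁ - b₂‖ := by ring
      _ = (1/4) * ‖b₁ - b₂‖ := by rw [hηeq]
    have n2 : ‖e • (M α (Pl (Q (caff α + El b₁) e) - Pl (Q (caff α + El b₂) e)))‖
        ≤ (1/4) * ‖b₁ - b₂‖ := by
      rw [norm_smul, Real.norm_eq_abs, abs_of_nonneg he.1]
      have hq : ‖Pl (Q (caff α + El b₁) e) - Pl (Q (caff α + El b₂) e)‖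
          ≤ CP * (L * (CE * ‖b₁ - b₂‖)) := by
        rw [← map_sub]
        calc ‖Pl (Q (caff α + El b₁) e - Q (caff α + El b₂) e)‖
            ≤ ‖Pl‖ * ‖Q (caff α + El b₁) e - Q (caff α + El b₂) e‖ := Pl.le_opNorm _
        _ ≤ CP * (L * (CE * ‖b₁ - b₂‖)) := by
            have h2 : ‖Q (caff α + El b₁) e - Q (caff α + El b₂) e‖
                ≤ L * (CE * ‖b₁ - b₂‖) :=
              le_trans hQl (mul_le_mul_of_nonneg_left hxx hLpos.le)
            exact mul_le_mul hPlle h2 (norm_nonneg _) hCPpos.le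
      have hm : ‖M α (Pl (Q (caff α + El b₁) e) - Pl (Q (caff α + El b₂) e))‖
          ≤ CM * (CP * (L * (CE * ‖b₁ - b₂‖))) := by
        calc ‖M α (Pl (Q (caff α + El b₁) e) - Pl (Q (caff α + El b₂) e))‖
            ≤ ‖M α‖ * ‖Pl (Q (caff α + El b₁) e) - Pl (Q (caff α + El b₂) e)‖ :=
              (M α).le_opNorm _
        _ ≤ CM * (CP * (L * (CE * ‖b₁ - b₂‖))) :=
          mul_le_mul (hCM α hα) hq (norm_nonneg _) hCMpos.le
      calc e * ‖M α (Pl (Q (caff α + El b₁) e) - Pl (Q (caff α + El b₂) e))‖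
          ≤ e * (CM * (CP * (L * (CE * ‖b₁ - b₂‖)))) :=
            mul_le_mul_of_nonneg_left hm he.1
      _ = (e * (CM * CP * CE * L)) * ‖b₁ - b₂‖ := by ring
      _ ≤ (1/4) * ‖b₁ - b₂‖ := by
          have h3 : e * (CM * CP * CE * L) ≤ 1/4 :=
            le_trans (mul_le_mul_of_nonneg_right he.2 (by positivity)) hε₀L
          exact mul_le_mul_of_nonneg_right h3 (norm_nonneg _)
    rw [hkey]
    calc ‖-(M α (g b₁ - g b₂))
          - e • (M α (Pl (Q (caff α + El b₁) e) - Pl (Q (caff α + El b₂) e)))‖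
        ≤ ‖-(M α (g b₁ - g b₂))‖
          + ‖e • (M α (Pl (Q (caff α + El b₁) e) - Pl (Q (caff α + El b₂) e)))‖ :=
          norm_sub_le _ _
    _ = ‖M α (g b₁ - g b₂)‖
          + ‖e • (M α (Pl (Q (caff α + El b₁) e) - Pl (Q (caff α + El b₂) e)))‖ := by
          rw [norm_neg]
    _ ≤ (1/4) * ‖b₁ - b₂‖ + (1/4) * ‖b₁ - b₂‖ := add_le_add n1 n2
    _ = (1/2) * ‖b₁ - b₂‖ := by ring
  have hPz₀ : ∀ α ∈ A, P (z₀ α) = 0 := fun α hα => hPZ _ (hz₀Z α hα)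
  have hbase : ∀ α ∈ A, ∀ e ∈ Set.Icc (0:ℝ) ε₀,
      ‖Φ α e (β₀ α) - β₀ α‖ ≤ e * (CM * (CP * CQ)) := by
    intro α hα e he
    have hx : caff α + El (β₀ α) = z₀ α := rfl
    have hG : G α (β₀ α) e = e • Pl (Q (z₀ α) e) := by
      simp only [hGdef]
      rw [hx, hPz₀ α hα, map_zero, zero_add]
    have hΦval : Φ α e (β₀ α) - β₀ α = -(M α (G α (β₀ α) e)) := by
      simp [hΦdef]
    rw [hΦval, norm_neg, hG]
    have hQb : ‖Pl (Q (z₀ α) e)‖ ≤ CP * CQ := by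
      calc ‖Pl (Q (z₀ α) e)‖ ≤ ‖Pl‖ * ‖Q (z₀ α) e‖ := Pl.le_opNorm _
      _ ≤ CP * CQ := mul_le_mul hPlle
          (hCQ _ (hz₀K₁ α hα) e ⟨he.1, le_trans he.2 hε₀le1⟩) (norm_nonneg _) hCPpos.le
    calc ‖M α (e • Pl (Q (z₀ α) e))‖ ≤ ‖M α‖ * ‖e • Pl (Q (z₀ α) e)‖ := (M α).le_opNorm _
    _ ≤ CM * (e * ‖Pl (Q (z₀ α) e)‖) := by
        rw [norm_smul, Real.norm_eq_abs, abs_of_nonneg he.1]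
        exact mul_le_mul (hCM α hα) le_rfl (mul_nonneg he.1 (norm_nonneg _)) hCMpos.le
    _ ≤ CM * (e * (CP * CQ)) := by
        have := mul_le_mul_of_nonneg_left hQb he.1
        exact mul_le_mul_of_nonneg_left this hCMpos.le
    _ = e * (CM * (CP * CQ)) := by ring
  have heCB : ∀ e ∈ Set.Icc (0:ℝ) ε₀, e * (CM * (CP * CQ)) ≤ δ₁/4 := by
    intro e he
    have hmono : CM * (CP * CQ) ≤ CM * CP * (CQ + 1) := by nlinarith
    calc e * (CM * (CP * CQ)) ≤ ε₀ * (CM * CP * (CQ + 1)) := by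
          apply mul_le_mul he.2 hmono (by positivity) hε₀pos.le
    _ ≤ δ₁/4 := hε₀B
  have hself : ∀ α ∈ A, ∀ e ∈ Set.Icc (0:ℝ) ε₀, ∀ b ∈ closedBall (β₀ α) δ₁,
      Φ α e b ∈ closedBall (β₀ α) δ₁ := by
    intro α hα e he b hb
    have h1 : ‖Φ α e b - Φ α e (β₀ α)‖ ≤ (1/2) * ‖b - β₀ α‖ :=
      hcontr α hα e he b hb (β₀ α) (mem_closedBall_self hδ₁pos.le)
    have h2 := hbase α hα e he
    have hb' : ‖b - β₀ α‖ ≤ δ₁ := mem_closedBall_iff_norm.1 hb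
    have h4 := heCB e he
    rw [mem_closedBall_iff_norm]
    have htri : ‖Φ α e b - β₀ α‖ ≤ ‖Φ α e b - Φ α e (β₀ α)‖ + ‖Φ α e (β₀ α) - β₀ α‖ := by
      have := dist_triangle (Φ α e b) (Φ α e (β₀ α)) (β₀ α)
      simpa [dist_eq_norm] using this
    calc ‖Φ α e b - β₀ α‖ ≤ ‖Φ α e b - Φ α e (β₀ α)‖ + ‖Φ α e (β₀ α) - β₀ α‖ := htri
    _ ≤ 1/2 * ‖b - β₀ α‖ + e * (CM * (CP * CQ)) := add_le_add h1 h2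
    _ ≤ 1/2 * δ₁ + δ₁/4 := add_le_add (by linarith only [hb']) h4
    _ ≤ δ₁ := by linarith only [hδ₁pos]
  have hexists : ∀ α ∈ A, ∀ e ∈ Set.Icc (0:ℝ) ε₀,
      ∃ b, b ∈ closedBall (β₀ α) δ₁ ∧ G α b e = 0 := by
    intro α hα e he
    obtain ⟨b, hb1, hb2⟩ := fixedPt_closedBall' (Φ α e) (β₀ α) δ₁ hδ₁pos.le
      (fun b hb => hself α hα e he b hb)
      (fun b₁ h₁ b₂ h₂ => by
        rw [dist_eq_norm, dist_eq_norm]; exact hcontr α hα e he b₁ h₁ b₂ h₂)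
    exact ⟨b, hb1, (hfixiff α hα e b).1 hb2⟩
  have huniq : ∀ α ∈ A, ∀ e ∈ Set.Icc (0:ℝ) ε₀, ∀ b₁ b₂,
      b₁ ∈ closedBall (β₀ α) δ₁ → b₂ ∈ closedBall (β₀ α) δ₁ →
      G α b₁ e = 0 → G α b₂ e = 0 → b₁ = b₂ := by
    intro α hα e he b₁ b₂ h₁ h₂ hg₁ hg₂
    have hf₁ : Φ α e b₁ = b₁ := (hfixiff α hα e b₁).2 hg₁
    have hf₂ : Φ α e b₂ = b₂ := (hfixiff α hα e b₂).2 hg₂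
    have := hcontr α hα e he b₁ h₁ b₂ h₂
    rw [hf₁, hf₂] at this
    have : ‖b₁ - b₂‖ ≤ 0 := by linarith
    have := le_antisymm this (norm_nonneg _)
    rwa [norm_eq_zero, sub_eq_zero] at this
  choose βf hβf1 hβf2 using hexists
  set β : (Fin k → ℝ) → ℝ → (Fin (n-k) → ℝ) :=
    fun α e => if h : α ∈ A ∧ e ∈ Set.Icc (0:ℝ) ε₀ then βf α h.1 e h.2 else β₀ α with hβdef
  have hβmem : ∀ α (hα : α ∈ A), ∀ e (he : e ∈ Set.Icc (0:ℝ) ε₀),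
      β α e ∈ closedBall (β₀ α) δ₁ := by
    intro α hα e he
    simp only [hβdef]
    rw [dif_pos (⟨hα, he⟩ : α ∈ A ∧ e ∈ Set.Icc (0:ℝ) ε₀)]
    exact hβf1 α hα e he
  have hβzero : ∀ α (hα : α ∈ A), ∀ e (he : e ∈ Set.Icc (0:ℝ) ε₀), G α (β α e) e = 0 := by
    intro α hα e he
    simp only [hβdef]
    rw [dif_pos (⟨hα, he⟩ : α ∈ A ∧ e ∈ Set.Icc (0:ℝ) ε₀)]
    exact hβf2 α hα e he
  -- distance bound to β₀
  have hβdist : ∀ α (hα : α ∈ A), ∀ e (he : e ∈ Set.Icc (0:ℝ) ε₀),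
      ‖β α e - β₀ α‖ ≤ 2 * (e * (CM * (CP * CQ))) := by
    intro α hα e he
    have hfix : Φ α e (β α e) = β α e := (hfixiff α hα e (β α e)).2 (hβzero α hα e he)
    have h1 : ‖Φ α e (β α e) - Φ α e (β₀ α)‖ ≤ (1/2) * ‖β α e - β₀ α‖ :=
      hcontr α hα e he (β α e) (hβmem α hα e he) (β₀ α) (mem_closedBall_self hδ₁pos.le)
    rw [hfix] at h1
    have h2 := hbase α hα e he
    have htri : ‖β α e - β₀ α‖ ≤ ‖β α e - Φ α e (β₀ α)‖ + ‖Φ α e (β₀ α) - β₀ α‖ := by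
      have := dist_triangle (β α e) (Φ α e (β₀ α)) (β₀ α)
      simpa [dist_eq_norm] using this
    linarith only [h1, h2, htri]
  have hβhalf : ∀ α (hα : α ∈ A), ∀ e (he : e ∈ Set.Icc (0:ℝ) ε₀),
      ‖β α e - β₀ α‖ ≤ δ₁ / 2 := by
    intro α hα e he
    have h1 := hβdist α hα e he
    have h2 := heCB e he
    calc ‖β α e - β₀ α‖ ≤ 2 * (e * (CM * (CP * CQ))) := h1
    _ ≤ 2 * (δ₁/4) := mul_le_mul_of_nonneg_left h2 (by norm_num)
    _ = δ₁ / 2 := by ring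
  -- continuity of β
  have hβcont : ContinuousOn (fun p : (Fin k → ℝ) × ℝ => β p.1 p.2)
      (A ×ˢ Set.Icc 0 ε₀) := by
    obtain ⟨Cb, hCb⟩ := hAcomp.exists_bound_of_continuousOn hβ₀c
    set R : ℝ := Cb + δ₁ with hRdef
    set W : Set ((Fin k → ℝ) × ((Fin (n-k) → ℝ) × ℝ)) :=
      A ×ˢ (closedBall (0 : Fin (n-k) → ℝ) R ×ˢ Set.Icc (0:ℝ) ε₀) with hWdef
    have hWcomp : IsCompact W := hAcomp.prod ((isCompact_closedBall _ _).prod isCompact_Icc)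
    set Gp : ((Fin k → ℝ) × ((Fin (n-k) → ℝ) × ℝ)) → (Fin (n-k) → ℝ) :=
      fun p => G p.1 p.2.1 p.2.2 with hGpdef
    have hxall : Continuous (fun p : (Fin k → ℝ) × ((Fin (n-k) → ℝ) × ℝ) =>
        caff p.1 + El p.2.1) :=
      (hcaff.comp continuous_fst).add (El.continuous.comp (continuous_fst.comp continuous_snd))
    have hGpc : ContinuousOn Gp W := by
      have hterm1 : Continuous (fun p : (Fin k → ℝ) × ((Fin (n-k) → ℝ) × ℝ) =>
          Pl (P (caff p.1 + El p.2.1))) :=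
        Pl.continuous.comp ((hP.continuous).comp hxall)
      have hQW : ContinuousOn (fun p : (Fin k → ℝ) × ((Fin (n-k) → ℝ) × ℝ) =>
          Q (caff p.1 + El p.2.1) p.2.2) W := by
        apply hQcont.comp (Continuous.continuousOn
          (hxall.prodMk (continuous_snd.comp continuous_snd)))
        intro p hp
        refine ⟨Set.mem_univ _, ?_⟩
        rcases hp with ⟨hp1, hp2, hp3⟩
        exact ⟨hp3.1, le_trans hp3.2 hε₀le1⟩
      exact hterm1.continuousOn.add
        (((continuous_snd.comp continuous_snd).continuousOn).smul
          (Pl.continuous.comp_continuousOn hQW))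
    have hUCG := Metric.uniformContinuousOn_iff.1
      (hWcomp.uniformContinuousOn_of_continuous hGpc)
    rw [Metric.continuousOn_iff]
    rintro ⟨α, e⟩ hp ε hε
    have hα : α ∈ A := hp.1
    have he : e ∈ Set.Icc (0:ℝ) ε₀ := hp.2
    have hε' : 0 < ε / (4 * CM) := by positivity
    obtain ⟨δg, hδgpos, hδg⟩ := hUCG _ hε'
    obtain ⟨δb, hδbpos, hδb⟩ := Metric.continuousWithinAt_iff.1 (hβ₀c α hα) (δ₁/2)
      (by positivity)
    refine ⟨min δg δb, lt_min hδgpos hδbpos, ?_⟩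
    rintro ⟨α', e'⟩ hp' hdist
    have hα' : α' ∈ A := hp'.1
    have he' : e' ∈ Set.Icc (0:ℝ) ε₀ := hp'.2
    have hdα : dist α' α < min δg δb := by
      have h : dist α' α ≤ dist ((α', e') : (Fin k → ℝ) × ℝ) (α, e) := by
        rw [Prod.dist_eq]; exact le_max_left _ _
      exact lt_of_le_of_lt h hdist
    have hde : dist e' e < min δg δb := by
      have h : dist e' e ≤ dist ((α', e') : (Fin k → ℝ) × ℝ) (α, e) := by
        rw [Prod.dist_eq]; exact le_max_right _ _
      exact lt_of_le_of_lt h hdist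
    have hβ₀d : ‖β₀ α' - β₀ α‖ < δ₁/2 := by
      rw [← dist_eq_norm]
      exact hδb hα' (lt_of_lt_of_le hdα (min_le_right _ _))
    set b' : Fin (n-k) → ℝ := β α' e' with hb'def
    have hb'G : G α' b' e' = 0 := hβzero α' hα' e' he'
    have hb'near : ‖b' - β₀ α'‖ ≤ δ₁/2 := hβhalf α' hα' e' he'
    have hb'ball : b' ∈ closedBall (β₀ α) δ₁ := by
      rw [mem_closedBall_iff_norm]
      have : ‖b' - β₀ α‖ ≤ ‖b' - β₀ α'‖ + ‖β₀ α' - β₀ α‖ := by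
        have := dist_triangle b' (β₀ α') (β₀ α)
        simpa [dist_eq_norm] using this
      linarith only [hb'near, hβ₀d, this]
    have hb'R : b' ∈ closedBall (0 : Fin (n-k) → ℝ) R := by
      rw [mem_closedBall_zero_iff]
      have h1 : ‖b'‖ ≤ ‖b' - β₀ α'‖ + ‖β₀ α'‖ := by
        have := norm_add_le (b' - β₀ α') (β₀ α')
        simpa using this
      have h2 := hCb α' hα'
      rw [hRdef]
      linarith only [h1, h2, hb'near, hδ₁pos]
    have huW : (α, (b', e)) ∈ W := ⟨hα, hb'R, he⟩
    have hvW : (α', (b', e')) ∈ W := ⟨hα', hb'R, he'⟩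
    have hduv : dist ((α, (b', e)) : (Fin k → ℝ) × ((Fin (n-k) → ℝ) × ℝ)) (α', (b', e')) < δg := by
      rw [Prod.dist_eq]
      apply max_lt
      · rw [dist_comm]; exact lt_of_lt_of_le hdα (min_le_left _ _)
      · rw [Prod.dist_eq]
        apply max_lt
        · simpa using hδgpos
        · rw [dist_comm]; exact lt_of_lt_of_le hde (min_le_left _ _)
    have hGsmall : ‖G α b' e‖ < ε / (4 * CM) := by
      have := hδg _ huW _ hvW hduv
      rw [dist_eq_norm] at this
      simpa [hGpdef, hb'G] using this
    have hfixp : Φ α e (β α e) = β α e := (hfixiff α hα e (β α e)).2 (hβzero α hα e he)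
    have hcontr' : ‖Φ α e b' - Φ α e (β α e)‖ ≤ (1/2) * ‖b' - β α e‖ :=
      hcontr α hα e he b' hb'ball (β α e) (hβmem α hα e he)
    rw [hfixp] at hcontr'
    have hΦb' : b' - Φ α e b' = M α (G α b' e) := by
      simp [hΦdef]
    have htri : ‖b' - β α e‖ ≤ ‖b' - Φ α e b'‖ + ‖Φ α e b' - β α e‖ := by
      have := dist_triangle b' (Φ α e b') (β α e)
      simpa [dist_eq_norm] using this
    have hMG : ‖M α (G α b' e)‖ ≤ CM * ‖G α b' e‖ := by
      calc ‖M α (G α b' e)‖ ≤ ‖M α‖ * ‖G α b' e‖ := (M α).le_opNorm _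
      _ ≤ CM * ‖G α b' e‖ := mul_le_mul_of_nonneg_right (hCM α hα) (norm_nonneg _)
    have hfin : ‖b' - β α e‖ < ε := by
      have h5 : CM * ‖G α b' e‖ < CM * (ε / (4 * CM)) :=
        mul_lt_mul_of_pos_left hGsmall hCMpos
      have h6 : CM * (ε / (4 * CM)) = ε / 4 := by field_simp
      rw [hΦb'] at htri
      linarith only [htri, hcontr', hMG, h5, h6, hε]
    rw [dist_eq_norm]
    exact hfin
  -- μ
  set μ : (Fin k → ℝ) → ℝ → (Fin (n-k) → ℝ) := fun α e => e⁻¹ • (β α e - β₀ α) with hμdef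
  refine ⟨δ₁, hδ₁pos, ε₀, hε₀pos, β, μ, hβcont, ?_, ?_, ?_, ?_, ?_⟩
  · -- β α 0 = β₀ α
    intro α hα
    have h0 : (0:ℝ) ∈ Set.Icc (0:ℝ) ε₀ := ⟨le_refl _, hε₀pos.le⟩
    have hG0 : G α (β₀ α) 0 = 0 := by
      simp only [hGdef]
      have hx : caff α + El (β₀ α) = z₀ α := rfl
      rw [hx, hPz₀ α hα, map_zero, zero_add, zero_smul]
    exact huniq α hα 0 h0 (β α 0) (β₀ α) (hβmem α hα 0 h0)
      (mem_closedBall_self hδ₁pos.le) (hβzero α hα 0 h0) hG0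
  · -- bound on μ
    refine ⟨2 * (CM * (CP * CQ)), ?_⟩
    intro α hα e he
    have hd := hβdist α hα e ⟨he.1.le, he.2⟩
    simp only [hμdef]
    rw [norm_smul, Real.norm_eq_abs, abs_inv, abs_of_pos he.1]
    rw [inv_mul_le_iff₀ he.1]
    calc ‖β α e - β₀ α‖ ≤ 2 * (e * (CM * (CP * CQ))) := hd
    _ = e * (2 * (CM * (CP * CQ))) := by ring
  · -- (i)
    intro α hα e he
    rw [hGF]
    exact hβzero α hα e he
  · -- (ii)
    intro α hα e he
    simp only [hμdef]
    rw [smul_smul, mul_inv_cancel₀ (ne_of_gt he.1), one_smul]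
    abel
  · -- (iii)
    intro α hα e he b hb hFb
    rw [hGF] at hFb
    exact huniq α hα e he b (β α e) (ball_subset_closedBall hb) (hβmem α hα e he)
      hFb (hβzero α hα e he)
end

section
/- Assume (A10), and for h ∈ closure(U) let W(·,h) denote the matrix solution of Ẇ = D_xf(t, x(t,ξ(h),0))W with W(0) = I_n (the normalized fundamental matrix of the linearized system). Then for every h ∈ closure(U): W(T,h)Dξ(h) = Dξ(h); for every c ∈ ℝᵏ the map t ↦ W(t,h)Dξ(h)c is a T-periodic solution of the linearized system ẏ = D_xf(t, x(t,ξ(h),0))y; and the k functions t ↦ W(t,h)Dξ(h)e_i, i = 1,…,k (e_i the standard basis of ℝᵏ), are linearly independent T-periodic solutions of the linearized system. -/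
open Set Filter Metric Real
open scoped Topology
set_option maxHeartbeats 1000000
set_option synthInstance.maxHeartbeats 400000

lemma tube_lemma_aux {T B : ℝ} (hT : 0 ≤ T) {d : ℝ → ℝ}
    (hd : ContinuousOn d (Set.Icc 0 T)) (hB : B < 1) (h0 : d 0 ≤ B)
    (step : ∀ b ∈ Set.Icc 0 T, (∀ s ∈ Set.Icc 0 b, d s ≤ 1) →
      ∀ s ∈ Set.Icc 0 b, d s ≤ B) :
    ∀ t ∈ Set.Icc 0 T, d t ≤ B := by
  set S : Set ℝ := {t | t ∈ Set.Icc 0 T ∧ ∀ s ∈ Set.Icc 0 t, d s ≤ 1} with hS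
  have h0S : (0:ℝ) ∈ S := by
    refine ⟨left_mem_Icc.2 hT, fun s hs => ?_⟩
    have : s = 0 := le_antisymm hs.2 hs.1
    rw [this]; exact h0.trans hB.le
  have hbdd : BddAbove S := ⟨T, fun t ht => ht.1.2⟩
  set τ := sSup S with hτ
  have hτ1 : 0 ≤ τ := le_csSup hbdd h0S
  have hτT : τ ≤ T := csSup_le ⟨0, h0S⟩ (fun t ht => ht.1.2)
  have hlt : ∀ s, 0 ≤ s → s < τ → d s ≤ 1 := by
    intro s hs0 hsτ
    obtain ⟨t, htS, hst⟩ := exists_lt_of_lt_csSup ⟨0, h0S⟩ hsτ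
    exact htS.2 s ⟨hs0, hst.le⟩
  have hdτ : d τ ≤ 1 := by
    rcases eq_or_lt_of_le hτ1 with h | h
    · rw [← h]; exact h0.trans hB.le
    · have hsub : Set.Ico (0:ℝ) τ ⊆ Set.Icc 0 T :=
        fun s hs => ⟨hs.1, hs.2.le.trans hτT⟩
      have hc : ContinuousWithinAt d (Set.Ico 0 τ) τ :=
        (hd τ ⟨hτ1, hτT⟩).mono hsub
      have hmem : τ ∈ closure (Set.Ico (0:ℝ) τ) := by
        rw [closure_Ico h.ne]
        exact right_mem_Icc.2 hτ1
      have hne : (𝓝[Set.Ico (0:ℝ) τ] τ).NeBot :=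
        mem_closure_iff_nhdsWithin_neBot.mp hmem
      refine le_of_tendsto hc ?_
      filter_upwards [self_mem_nhdsWithin] with s hs
      exact hlt s hs.1 hs.2
  have hτS : τ ∈ S := by
    refine ⟨⟨hτ1, hτT⟩, fun s hs => ?_⟩
    rcases eq_or_lt_of_le hs.2 with h | h
    · rw [h]; exact hdτ
    · exact hlt s hs.1 h
  have hτeq : τ = T := by
    by_contra hne
    have hlt2 : τ < T := lt_of_le_of_ne hτT hne
    have hdτB : d τ ≤ B := step τ hτS.1 hτS.2 τ ⟨hτ1, le_refl _⟩
    have hdτ1 : d τ < 1 := lt_of_le_of_lt hdτB hB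
    have hc : ContinuousWithinAt d (Set.Icc 0 T) τ := hd τ ⟨hτ1, hτT⟩
    have hpre : d ⁻¹' (Set.Iio 1) ∈ 𝓝[Set.Icc 0 T] τ := hc (Iio_mem_nhds hdτ1)
    rw [Metric.mem_nhdsWithin_iff] at hpre
    obtain ⟨ε, hε, hball⟩ := hpre
    set t' := min (τ + ε/2) T with ht'
    have hτt' : τ < t' := lt_min (by linarith) hlt2
    have ht'S : t' ∈ S := by
      refine ⟨⟨hτ1.trans hτt'.le, min_le_right _ _⟩, fun s hs => ?_⟩
      rcases le_or_gt s τ with h | h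
      · exact hτS.2 s ⟨hs.1, h⟩
      · have hsT : s ∈ Set.Icc 0 T := ⟨hs.1, hs.2.trans (min_le_right _ _)⟩
        have hsb : s ∈ Metric.ball τ ε := by
          rw [Metric.mem_ball, Real.dist_eq, abs_of_pos (by linarith)]
          have : s ≤ τ + ε/2 := hs.2.trans (min_le_left _ _)
          linarith
        exact (hball ⟨hsb, hsT⟩).le
    exact absurd (le_csSup hbdd ht'S) (not_le.2 hτt')
  intro t ht
  exact step T (right_mem_Icc.2 hT) (hτeq ▸ hτS.2) t ht


theorem stmt14
    (n k : ℕ) (hn : 1 ≤ n) (hk1 : 1 ≤ k) (hkn : k ≤ n)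
    (T : ℝ) (hT : 0 < T)
    -- f ∈ C², T-periodic in the first variable
    (f : ℝ → (Fin n → ℝ) → (Fin n → ℝ)) (hf : ContDiff ℝ 2 (Function.uncurry f))
    (hfper : ∀ t z, f (t + T) z = f t z)
    -- (A10)
    (U : Set (Fin k → ℝ)) (cU : Fin k → ℝ) (rU : ℝ) (hrU : 0 < rU)
    (hU : U = Metric.ball cU rU)
    (ξ : (Fin k → ℝ) → (Fin n → ℝ)) (hξ : ContDiffOn ℝ 1 ξ (closure U))
    (hξrank : ∀ h ∈ closure U, Function.Injective (fderivWithin ℝ ξ (closure U) h))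
    -- x(·,z) is the solution of the unperturbed system, T-periodic for z = ξ(h)
    (x : ℝ → (Fin n → ℝ) → (Fin n → ℝ))
    (hx0 : ∀ h ∈ closure U, x 0 (ξ h) = ξ h)
    (hxsol : ∀ h ∈ closure U, ∀ t : ℝ,
      HasDerivAt (fun s => x s (ξ h)) (f t (x t (ξ h))) t)
    (hxper : ∀ h ∈ closure U, ∀ t : ℝ, x (t + T) (ξ h) = x t (ξ h))
    -- W(·,h) is the normalized fundamental matrix of the linearized system
    (W : ℝ → (Fin k → ℝ) → Matrix (Fin n) (Fin n) ℝ)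
    (hW0 : ∀ h ∈ closure U, W 0 h = 1)
    (hWsol : ∀ h ∈ closure U, ∀ (c : Fin n → ℝ) (t : ℝ),
      HasDerivAt (fun s => (W s h).mulVec c)
        (fderiv ℝ (f t) (x t (ξ h)) ((W t h).mulVec c)) t) :
    ∀ h ∈ closure U,
      -- W(T,h)Dξ(h) = Dξ(h)
      (∀ v : Fin k → ℝ,
        (W T h).mulVec (fderivWithin ℝ ξ (closure U) h v)
          = fderivWithin ℝ ξ (closure U) h v) ∧
      -- t ↦ W(t,h)Dξ(h)c is a T-periodic solution of the linearized system
      (∀ c : Fin k → ℝ,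
        (∀ t : ℝ, HasDerivAt
          (fun s => (W s h).mulVec (fderivWithin ℝ ξ (closure U) h c))
          (fderiv ℝ (f t) (x t (ξ h))
            ((W t h).mulVec (fderivWithin ℝ ξ (closure U) h c))) t) ∧
        (∀ t : ℝ, (W (t + T) h).mulVec (fderivWithin ℝ ξ (closure U) h c)
          = (W t h).mulVec (fderivWithin ℝ ξ (closure U) h c))) ∧
      -- the k solutions t ↦ W(t,h)Dξ(h)eᵢ are linearly independent
      LinearIndependent ℝ (fun i : Fin k => fun t : ℝ =>
        (W t h).mulVec (fderivWithin ℝ ξ (closure U) h (Pi.single i 1))) := by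
  intro h hh
  have hCball : closure U = Metric.closedBall cU rU := by
    rw [hU, closure_ball cU hrU.ne']
  have hCconv : Convex ℝ (closure U) := hCball ▸ convex_closedBall cU rU
  have hξdiff : ∀ h' ∈ closure U,
      HasFDerivWithinAt ξ (fderivWithin ℝ ξ (closure U) h') (closure U) h' :=
    fun h' hh' => ((hξ.differentiableOn one_ne_zero) h' hh').hasFDerivWithinAt
  set D := fderivWithin ℝ ξ (closure U) h with hDdef
  set F := Function.uncurry f with hFdef
  have hfdiff : Differentiable ℝ F := hf.differentiable (by norm_num)
  have hF1 : ContDiff ℝ 1 (fderiv ℝ F) := hf.fderiv_right (by norm_num)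
  -- partial derivative in the second variable
  have hpart : ∀ (t : ℝ) (y : Fin n → ℝ), HasFDerivAt (f t)
      ((fderiv ℝ F (t, y)).comp (ContinuousLinearMap.inr ℝ ℝ (Fin n → ℝ))) y := by
    intro t y
    have h1 : HasFDerivAt F (fderiv ℝ F (t, y)) (t, y) := (hfdiff (t, y)).hasFDerivAt
    have h2 : HasFDerivAt (fun z : Fin n → ℝ => (t, z))
        (ContinuousLinearMap.inr ℝ ℝ (Fin n → ℝ)) y := hasFDerivAt_prodMk_right t y
    exact h1.comp y h2
  have hfderiv_eq : ∀ (t : ℝ) (y : Fin n → ℝ), fderiv ℝ (f t) y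
      = (fderiv ℝ F (t, y)).comp (ContinuousLinearMap.inr ℝ ℝ (Fin n → ℝ)) :=
    fun t y => (hpart t y).fderiv
  have hcompinr : ∀ (L : (ℝ × (Fin n → ℝ)) →L[ℝ] (Fin n → ℝ)),
      ‖L.comp (ContinuousLinearMap.inr ℝ ℝ (Fin n → ℝ))‖ ≤ ‖L‖ := by
    intro L
    refine ContinuousLinearMap.opNorm_le_bound _ (norm_nonneg _) (fun z => ?_)
    have : (L.comp (ContinuousLinearMap.inr ℝ ℝ (Fin n → ℝ))) z = L (0, z) := rfl
    rw [this]
    calc ‖L (0, z)‖ ≤ ‖L‖ * ‖((0 : ℝ), z)‖ := L.le_opNorm _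
    _ = ‖L‖ * ‖z‖ := by rw [Prod.norm_def]; simp
  -- the solution through ξ h
  have hψd : ∀ t : ℝ, HasDerivAt (fun s => x s (ξ h)) (f t (x t (ξ h))) t := hxsol h hh
  have hψc : Continuous (fun t => x t (ξ h)) :=
    continuous_iff_continuousAt.2 fun t => (hψd t).continuousAt
  -- compact bounds
  obtain ⟨M0, hM0⟩ : ∃ M0, ∀ t ∈ Set.Icc (0:ℝ) T, ‖x t (ξ h)‖ ≤ M0 :=
    isCompact_Icc.exists_bound_of_continuousOn hψc.continuousOn
  set R := max M0 0 + 2 with hRdef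
  have hψR : ∀ t ∈ Set.Icc (0:ℝ) T, ‖x t (ξ h)‖ ≤ R - 2 := by
    intro t ht; have := hM0 t ht; simp only [hRdef]
    have : M0 ≤ max M0 0 := le_max_left _ _
    linarith [hM0 t ht]
  have hR2 : (2:ℝ) ≤ R := by have := le_max_right M0 0; simp only [hRdef]; linarith
  set Kset := Metric.closedBall (0 : Fin n → ℝ) R with hKdef
  have hψK : ∀ t ∈ Set.Icc (0:ℝ) T, x t (ξ h) ∈ Kset := by
    intro t ht
    rw [hKdef, Metric.mem_closedBall, dist_zero_right]
    linarith [hψR t ht]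
  set Q := Set.Icc (0:ℝ) T ×ˢ Kset with hQdef
  have hQcomp : IsCompact Q := isCompact_Icc.prod (isCompact_closedBall 0 R)
  have hQconv : Convex ℝ Q := (convex_Icc 0 T).prod (convex_closedBall 0 R)
  obtain ⟨M1, hM1⟩ : ∃ M1, ∀ p ∈ Q, ‖fderiv ℝ F p‖ ≤ M1 :=
    hQcomp.exists_bound_of_continuousOn (hF1.continuous.continuousOn)
  set M := max M1 1 with hMdef
  have hM1le : (1:ℝ) ≤ M := le_max_right _ _
  have hMpos : (0:ℝ) < M := lt_of_lt_of_le one_pos hM1le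
  have hMQ : ∀ p ∈ Q, ‖fderiv ℝ F p‖ ≤ M := fun p hp => (hM1 p hp).trans (le_max_left _ _)
  obtain ⟨M2', hM2'⟩ : ∃ M2', ∀ p ∈ Q, ‖fderiv ℝ (fderiv ℝ F) p‖ ≤ M2' :=
    hQcomp.exists_bound_of_continuousOn ((hF1.continuous_fderiv one_ne_zero).continuousOn)
  set M2 := max M2' 0 with hM2def
  have hM2nn : (0:ℝ) ≤ M2 := le_max_right _ _
  -- Lipschitz bound for fderiv F on Q
  have hDFlip : ∀ p ∈ Q, ∀ q ∈ Q, ‖fderiv ℝ F p - fderiv ℝ F q‖ ≤ M2 * ‖p - q‖ := by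
    intro p hp q hq
    exact hQconv.norm_image_sub_le_of_norm_fderiv_le
      (fun r _ => (hF1.differentiable one_ne_zero) r)
      (fun r hr => (hM2' r hr).trans (le_max_left _ _)) hq hp
  -- Lipschitz bound for f
  have hflip : ∀ t ∈ Set.Icc (0:ℝ) T, ∀ y ∈ Kset, ∀ y' ∈ Kset,
      ‖f t y - f t y'‖ ≤ M * ‖y - y'‖ := by
    intro t ht y hy y' hy'
    have := hQconv.norm_image_sub_le_of_norm_fderiv_le
      (fun r _ => hfdiff r) hMQ (Set.mk_mem_prod ht hy') (Set.mk_mem_prod ht hy)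
    have he : ((t, y) : ℝ × (Fin n → ℝ)) - (t, y') = (0, y - y') := by
      simp [Prod.ext_iff]
    have hnorm : ‖((t, y) : ℝ × (Fin n → ℝ)) - (t, y')‖ = ‖y - y'‖ := by
      rw [he, Prod.norm_def]; simp
    calc ‖f t y - f t y'‖ = ‖F (t, y) - F (t, y')‖ := rfl
    _ ≤ M * ‖((t, y) : ℝ × (Fin n → ℝ)) - (t, y')‖ := this
    _ = M * ‖y - y'‖ := by rw [hnorm]
  -- quadratic remainder bound
  have hquad : ∀ t ∈ Set.Icc (0:ℝ) T, ∀ y ∈ Kset,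
      ‖f t y - f t (x t (ξ h)) - (fderiv ℝ (f t) (x t (ξ h))) (y - x t (ξ h))‖
        ≤ M2 * ‖y - x t (ξ h)‖ * ‖y - x t (ξ h)‖ := by
    intro t ht y hy
    set ψt := x t (ξ h) with hψt
    have hψtK : ψt ∈ Kset := hψK t ht
    have hseg : segment ℝ ψt y ⊆ Kset := (convex_closedBall 0 R).segment_subset hψtK hy
    have hsegbound : ∀ z ∈ segment ℝ ψt y, ‖z - ψt‖ ≤ ‖y - ψt‖ := by
      intro z hz
      obtain ⟨a, b, ha, hb, hab, rfl⟩ := hz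
      have : a • ψt + b • y - ψt = b • (y - ψt) := by
        have ha' : a = 1 - b := by linarith
        rw [ha']; module
      rw [this, norm_smul, Real.norm_eq_abs, abs_of_nonneg hb]
      nlinarith [norm_nonneg (y - ψt)]
    have hbound : ∀ z ∈ segment ℝ ψt y,
        ‖fderiv ℝ (f t) z - fderiv ℝ (f t) ψt‖ ≤ M2 * ‖y - ψt‖ := by
      intro z hz
      have h1 : fderiv ℝ (f t) z - fderiv ℝ (f t) ψt
          = (fderiv ℝ F (t, z) - fderiv ℝ F (t, ψt)).comp
              (ContinuousLinearMap.inr ℝ ℝ (Fin n → ℝ)) := by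
        rw [hfderiv_eq, hfderiv_eq, ContinuousLinearMap.sub_comp]
      rw [h1]
      refine (hcompinr _).trans ?_
      have h2 := hDFlip (t, z) (Set.mk_mem_prod ht (hseg hz)) (t, ψt)
        (Set.mk_mem_prod ht hψtK)
      have he : ((t, z) : ℝ × (Fin n → ℝ)) - (t, ψt) = (0, z - ψt) := by
        simp [Prod.ext_iff]
      rw [he, Prod.norm_def] at h2
      simp only [norm_zero] at h2
      refine h2.trans ?_
      have := hsegbound z hz
      have h3 : max 0 ‖z - ψt‖ = ‖z - ψt‖ := max_eq_right (norm_nonneg _)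
      rw [h3]
      nlinarith [norm_nonneg (z - ψt)]
    have := Convex.norm_image_sub_le_of_norm_hasFDerivWithin_le'
      (f := f t) (f' := fun z => fderiv ℝ (f t) z) (φ := fderiv ℝ (f t) ψt)
      (s := segment ℝ ψt y)
      (fun z _ => (hpart t z).differentiableAt.hasFDerivAt.hasFDerivWithinAt)
      hbound (convex_segment _ _) (left_mem_segment ℝ ψt y) (right_mem_segment ℝ ψt y)
    calc ‖f t y - f t ψt - (fderiv ℝ (f t) ψt) (y - ψt)‖ ≤ M2 * ‖y - ψt‖ * ‖y - ψt‖ := this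
    _ = M2 * ‖y - ψt‖ * ‖y - ψt‖ := rfl

  -- operator norm bound along the trajectory
  have hAb : ∀ t ∈ Set.Icc (0:ℝ) T, ‖fderiv ℝ (f t) (x t (ξ h))‖ ≤ M := by
    intro t ht
    rw [hfderiv_eq]
    exact (hcompinr _).trans (hMQ _ (Set.mk_mem_prod ht (hψK t ht)))
  have hexp1 : 1 ≤ exp (M*T) := Real.one_le_exp (by positivity)
  set CC := (M2 * exp (M*T) * exp (M*T) / M) * (exp (M*T) - 1) with hCCdef
  have hCCnn : 0 ≤ CC := by
    have h1 : 0 ≤ M2 * exp (M*T) * exp (M*T) / M :=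
      div_nonneg (mul_nonneg (mul_nonneg hM2nn (exp_pos _).le) (exp_pos _).le) hMpos.le
    exact mul_nonneg h1 (by linarith)
  have key : ∀ h' ∈ closure U, ‖ξ h' - ξ h‖ * exp (M*T) ≤ 1/2 →
      ‖(ξ h' - ξ h) - (W T h).mulVec (ξ h' - ξ h)‖
        ≤ CC * (‖ξ h' - ξ h‖ * ‖ξ h' - ξ h‖) := by
    intro h' hh' hsmall
    set w := ξ h' - ξ h with hwdef
    have hwnn : 0 ≤ ‖w‖ := norm_nonneg w
    have hφd : ∀ t : ℝ, HasDerivAt (fun s => x s (ξ h')) (f t (x t (ξ h'))) t := hxsol h' hh'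
    have hφc : Continuous (fun t => x t (ξ h')) :=
      continuous_iff_continuousAt.2 fun t => (hφd t).continuousAt
    set B := ‖w‖ * exp (M*T) with hBdef
    have hBnn : 0 ≤ B := mul_nonneg hwnn (exp_pos _).le
    have hB1 : B ≤ 1/2 := hsmall
    have hKmem : ∀ t ∈ Set.Icc (0:ℝ) T, ‖x t (ξ h') - x t (ξ h)‖ ≤ 1 → x t (ξ h') ∈ Kset := by
      intro t ht hd
      rw [hKdef, Metric.mem_closedBall, dist_zero_right]
      have h2 := hψR t ht
      have h3 := norm_sub_norm_le (x t (ξ h')) (x t (ξ h))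
      linarith
    -- Step A: tube estimate
    have stepA : ∀ t ∈ Set.Icc (0:ℝ) T, ‖x t (ξ h') - x t (ξ h)‖ ≤ B := by
      apply tube_lemma_aux hT.le ((hφc.sub hψc).norm.continuousOn) (by linarith)
      · show ‖x 0 (ξ h') - x 0 (ξ h)‖ ≤ B
        rw [hx0 h' hh', hx0 h hh]
        exact le_mul_of_one_le_right hwnn hexp1
      · intro b hb hble s hs
        have hgron := norm_le_gronwallBound_of_norm_deriv_right_le
          (f := fun t => x t (ξ h') - x t (ξ h))
          (f' := fun t => f t (x t (ξ h')) - f t (x t (ξ h)))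
          (δ := ‖w‖) (K := M) (ε := 0) (a := 0) (b := b)
          ((hφc.sub hψc).continuousOn)
          (fun t _ => ((hφd t).sub (hψd t)).hasDerivWithinAt)
          (by show ‖x 0 (ξ h') - x 0 (ξ h)‖ ≤ ‖w‖; rw [hx0 h' hh', hx0 h hh])
          ?_ s hs
        · refine hgron.trans ?_
          rw [sub_zero, gronwallBound_ε0]
          have hse : exp (M * s) ≤ exp (M * T) :=
            exp_le_exp.2 (mul_le_mul_of_nonneg_left (hs.2.trans hb.2) hMpos.le)
          exact mul_le_mul_of_nonneg_left hse hwnn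
        · intro t ht
          have htT : t ∈ Set.Icc (0:ℝ) T := ⟨ht.1, ht.2.le.trans hb.2⟩
          have hφK : x t (ξ h') ∈ Kset := hKmem t htT (hble t ⟨ht.1, ht.2.le⟩)
          have := hflip t htT _ hφK _ (hψK t htT)
          simpa using this
    -- Step B: second Gronwall estimate
    set uu : ℝ → (Fin n → ℝ) :=
      fun t => x t (ξ h') - x t (ξ h) - (W t h).mulVec w with huu
    have huu0 : uu 0 = 0 := by
      simp only [huu, hx0 h' hh', hx0 h hh, hW0 h hh, Matrix.one_mulVec, hwdef]
      abel
    have huud : ∀ t : ℝ, HasDerivAt uu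
        (f t (x t (ξ h')) - f t (x t (ξ h))
          - fderiv ℝ (f t) (x t (ξ h)) ((W t h).mulVec w)) t :=
      fun t => ((hφd t).sub (hψd t)).sub (hWsol h hh w t)
    have huuc : Continuous uu :=
      continuous_iff_continuousAt.2 fun t => (huud t).continuousAt
    set ε0 := M2 * B * B with hε0
    have hbound : ∀ t ∈ Set.Ico (0:ℝ) T,
        ‖f t (x t (ξ h')) - f t (x t (ξ h))
          - fderiv ℝ (f t) (x t (ξ h)) ((W t h).mulVec w)‖ ≤ M * ‖uu t‖ + ε0 := by
      intro t ht
      have htT : t ∈ Set.Icc (0:ℝ) T := ⟨ht.1, ht.2.le⟩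
      have hφψ := stepA t htT
      have hφK : x t (ξ h') ∈ Kset := hKmem t htT (by linarith)
      have hq := hquad t htT _ hφK
      have heq : f t (x t (ξ h')) - f t (x t (ξ h))
            - fderiv ℝ (f t) (x t (ξ h)) ((W t h).mulVec w)
          = fderiv ℝ (f t) (x t (ξ h)) (uu t)
            + (f t (x t (ξ h')) - f t (x t (ξ h))
              - fderiv ℝ (f t) (x t (ξ h)) (x t (ξ h') - x t (ξ h))) := by
        rw [huu, map_sub]
        abel
      rw [heq]
      refine (norm_add_le _ _).trans ?_
      have h1 : ‖fderiv ℝ (f t) (x t (ξ h)) (uu t)‖ ≤ M * ‖uu t‖ :=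
        (ContinuousLinearMap.le_opNorm _ _).trans
          (mul_le_mul_of_nonneg_right (hAb t htT) (norm_nonneg _))
      have h2 : ‖f t (x t (ξ h')) - f t (x t (ξ h))
          - fderiv ℝ (f t) (x t (ξ h)) (x t (ξ h') - x t (ξ h))‖ ≤ ε0 := by
        refine hq.trans ?_
        rw [hε0]
        have hdd : ‖x t (ξ h') - x t (ξ h)‖ * ‖x t (ξ h') - x t (ξ h)‖ ≤ B * B :=
          mul_le_mul hφψ hφψ (norm_nonneg _) hBnn
        nlinarith [hdd, hM2nn]
      linarith
    have stepB := norm_le_gronwallBound_of_norm_deriv_right_le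
      (f := uu)
      (f' := fun t => f t (x t (ξ h')) - f t (x t (ξ h))
        - fderiv ℝ (f t) (x t (ξ h)) ((W t h).mulVec w))
      (δ := 0) (K := M) (ε := ε0) (a := 0) (b := T)
      huuc.continuousOn
      (fun t _ => (huud t).hasDerivWithinAt)
      (by rw [huu0]; simp)
      hbound T (right_mem_Icc.2 hT.le)
    have hgb : gronwallBound 0 M ε0 (T - 0) = CC * (‖w‖ * ‖w‖) := by
      rw [sub_zero, gronwallBound_of_K_ne_0 hMpos.ne']
      rw [hε0, hBdef, hCCdef]
      field_simp
      ring
    have hφT : x T (ξ h') = ξ h' := by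
      have := hxper h' hh' 0; rw [zero_add] at this; rw [this, hx0 h' hh']
    have hψT : x T (ξ h) = ξ h := by
      have := hxper h hh 0; rw [zero_add] at this; rw [this, hx0 h hh]
    have huuT : uu T = w - (W T h).mulVec w := by
      rw [huu]
      simp only [hφT, hψT, hwdef]
    rw [hgb, huuT] at stepB
    exact stepB

  -- Step C: directions into the closed ball
  have dir : ∀ u0 ∈ closure U, (W T h).mulVec (D (u0 - h)) = D (u0 - h) := by
    intro u0 hu0
    set v := u0 - h with hvdef
    set γ : ℝ → (Fin k → ℝ) := fun s => h + s • v with hγdef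
    have hγ0 : γ 0 = h := by simp [hγdef]
    have hγmem : ∀ s ∈ Set.Icc (0:ℝ) 1, γ s ∈ closure U := fun s hs =>
      hCconv.add_smul_sub_mem hh hu0 hs
    have hγd : HasDerivAt γ v 0 := by
      have h1 : HasDerivAt (fun s : ℝ => s • v) ((1:ℝ) • v) 0 := (hasDerivAt_id 0).smul_const v
      have h2 := h1.const_add h; rw [one_smul] at h2; exact h2
    have hwd : HasDerivWithinAt (fun s => ξ (γ s) - ξ h) (D v) (Set.Icc 0 1) 0 := by
      have hcomp := (hξdiff h hh).comp_hasDerivWithinAt_of_eq 0 hγd.hasDerivWithinAt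
        (fun s hs => hγmem s hs) hγ0.symm
      exact hcomp.sub_const (ξ h)
    set WTc : (Fin n → ℝ) →L[ℝ] (Fin n → ℝ) :=
      LinearMap.toContinuousLinearMap ((W T h).mulVecLin) with hWTc
    have hWTapp : ∀ z, WTc z = (W T h).mulVec z := fun z => rfl
    set ρ : ℝ → (Fin n → ℝ) := fun s => (ξ (γ s) - ξ h) - WTc (ξ (γ s) - ξ h) with hρdef
    have hρd : HasDerivWithinAt ρ (D v - WTc (D v)) (Set.Icc 0 1) 0 :=
      hwd.sub (WTc.hasFDerivAt.comp_hasDerivWithinAt 0 hwd)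
    have hρ0 : ρ 0 = 0 := by simp [hρdef, hγ0]
    have hwc : ContinuousWithinAt (fun s => ξ (γ s) - ξ h) (Set.Icc 0 1) 0 :=
      hwd.continuousWithinAt
    have hw0 : ξ (γ 0) - ξ h = 0 := by rw [hγ0, sub_self]
    have hev1 : ∀ᶠ s in 𝓝[Set.Icc (0:ℝ) 1] 0, ‖ξ (γ s) - ξ h‖ * exp (M*T) ≤ 1/2 := by
      have hδ : (0:ℝ) < (1/2) / exp (M*T) := by positivity
      have htends : Filter.Tendsto (fun s => ξ (γ s) - ξ h) (𝓝[Set.Icc (0:ℝ) 1] 0)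
          (𝓝 (0 : Fin n → ℝ)) := by
        have := hwc.tendsto
        rwa [hw0] at this
      have hball := htends (Metric.ball_mem_nhds (0 : Fin n → ℝ) hδ)
      filter_upwards [hball] with s hs
      rw [Set.mem_preimage, Metric.mem_ball, dist_zero_right] at hs
      calc ‖ξ (γ s) - ξ h‖ * exp (M*T) ≤ ((1/2) / exp (M*T)) * exp (M*T) :=
            mul_le_mul_of_nonneg_right hs.le (exp_pos _).le
      _ = 1/2 := div_mul_cancel₀ _ (exp_pos _).ne'
    have hlo := hasDerivWithinAt_iff_isLittleO.mp hwd
    have hev2 : ∀ᶠ s in 𝓝[Set.Icc (0:ℝ) 1] 0, ‖ξ (γ s) - ξ h‖ ≤ (‖D v‖ + 1) * ‖s‖ := by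
      filter_upwards [hlo.def one_pos] with s hs
      rw [hw0, sub_zero, sub_zero, one_mul] at hs
      have h1 : ‖ξ (γ s) - ξ h‖ ≤ ‖ξ (γ s) - ξ h - s • D v‖ + ‖s • D v‖ := by
        have := norm_add_le (ξ (γ s) - ξ h - s • D v) (s • D v)
        simpa using this
      have h2 : ‖s • D v‖ = ‖s‖ * ‖D v‖ := by rw [norm_smul]
      nlinarith [norm_nonneg (s • D v), norm_nonneg s, norm_nonneg (D v)]
    have hev3 : ∀ᶠ s in 𝓝[Set.Icc (0:ℝ) 1] 0,
        ‖ρ s‖ ≤ (CC * (‖D v‖+1)^2) * (‖s‖ * ‖s‖) := by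
      filter_upwards [hev1, hev2, self_mem_nhdsWithin] with s hs1 hs2 hs3
      have hkey := key (γ s) (hγmem s hs3) hs1
      have hρs : ρ s = (ξ (γ s) - ξ h) - (W T h).mulVec (ξ (γ s) - ξ h) := rfl
      rw [hρs]
      refine hkey.trans ?_
      have h1 : ‖ξ (γ s) - ξ h‖ * ‖ξ (γ s) - ξ h‖
          ≤ ((‖D v‖+1) * ‖s‖) * ((‖D v‖+1) * ‖s‖) :=
        mul_le_mul hs2 hs2 (norm_nonneg _) (by positivity)
      calc CC * (‖ξ (γ s) - ξ h‖ * ‖ξ (γ s) - ξ h‖)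
          ≤ CC * (((‖D v‖+1) * ‖s‖) * ((‖D v‖+1) * ‖s‖)) :=
            mul_le_mul_of_nonneg_left h1 hCCnn
      _ = (CC * (‖D v‖+1)^2) * (‖s‖ * ‖s‖) := by ring
    have hρd0 : HasDerivWithinAt ρ 0 (Set.Icc 0 1) 0 := by
      rw [hasDerivWithinAt_iff_isLittleO, Asymptotics.isLittleO_iff]
      intro c hc
      have hK0 : (0:ℝ) ≤ CC * (‖D v‖+1)^2 := by positivity
      have hevs : ∀ᶠ s in 𝓝[Set.Icc (0:ℝ) 1] 0,
          ‖s‖ ≤ c / (CC * (‖D v‖+1)^2 + 1) := by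
        have hpos : 0 < c / (CC * (‖D v‖+1)^2 + 1) := by positivity
        have hball : ∀ᶠ s : ℝ in 𝓝 0, ‖s‖ ≤ c / (CC * (‖D v‖+1)^2 + 1) := by
          filter_upwards [Metric.ball_mem_nhds (0:ℝ) hpos] with s hs
          rw [Metric.mem_ball, dist_zero_right] at hs; exact hs.le
        exact hball.filter_mono nhdsWithin_le_nhds
      filter_upwards [hev3, hevs] with s hs1 hs2
      rw [hρ0, sub_zero, sub_zero, smul_zero, sub_zero]
      have h5 : (CC * (‖D v‖+1)^2) * ‖s‖ ≤ c := by
        have h6 := mul_le_mul_of_nonneg_left hs2 hK0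
        have h7 : CC * (‖D v‖+1)^2 * (c / (CC * (‖D v‖+1)^2 + 1)) ≤ c := by
          rw [mul_div_assoc', div_le_iff₀ (by positivity)]
          nlinarith [hc.le, hK0]
        linarith
      have h8 : (CC * (‖D v‖+1)^2) * (‖s‖ * ‖s‖) = ((CC * (‖D v‖+1)^2) * ‖s‖) * ‖s‖ := by
        ring
      rw [h8] at hs1
      exact hs1.trans (mul_le_mul_of_nonneg_right h5 (norm_nonneg s))
    have hU1 : UniqueDiffWithinAt ℝ (Set.Icc (0:ℝ) 1) 0 :=
      (uniqueDiffOn_Icc one_pos) 0 (Set.left_mem_Icc.2 zero_le_one)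
    have e1 := hρd.derivWithin hU1
    have e2 := hρd0.derivWithin hU1
    have huniq : D v - WTc (D v) = 0 := e1.symm.trans e2
    rw [← hWTapp]
    exact (sub_eq_zero.mp huniq).symm
  -- spanning: part 1 for all directions
  have part1 : ∀ v : Fin k → ℝ, (W T h).mulVec (D v) = D v := by
    intro v
    set c0 := rU / (‖v‖ + 1) with hc0
    have hc0pos : 0 < c0 := by positivity
    have hmem1 : cU + c0 • v ∈ closure U := by
      rw [hCball, Metric.mem_closedBall, dist_eq_norm]
      have he : cU + c0 • v - cU = c0 • v := by abel
      rw [he, norm_smul, Real.norm_eq_abs, abs_of_pos hc0pos, hc0]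
      rw [div_mul_eq_mul_div, div_le_iff₀ (by positivity)]
      nlinarith [norm_nonneg v, hrU]
    have hmem2 : cU ∈ closure U := by
      rw [hCball]; exact Metric.mem_closedBall_self hrU.le
    have h1 := dir _ hmem1
    have h2 := dir _ hmem2
    have hvdecomp : v = c0⁻¹ • ((cU + c0 • v - h) - (cU - h)) := by
      have he : (cU + c0 • v - h) - (cU - h) = c0 • v := by abel
      rw [he, smul_smul, inv_mul_cancel₀ hc0pos.ne', one_smul]
    calc (W T h).mulVec (D v)
        = (W T h).mulVec (D (c0⁻¹ • ((cU + c0 • v - h) - (cU - h)))) := by rw [← hvdecomp]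
      _ = c0⁻¹ • ((W T h).mulVec (D (cU + c0 • v - h)) - (W T h).mulVec (D (cU - h))) := by
          rw [map_smul, map_sub, Matrix.mulVec_smul, Matrix.mulVec_sub]
      _ = c0⁻¹ • (D (cU + c0 • v - h) - D (cU - h)) := by rw [h1, h2]
      _ = D v := by rw [← map_sub, ← map_smul, ← hvdecomp]
  -- continuity of the linearized coefficient
  have hAcont : Continuous (fun t => fderiv ℝ (f t) (x t (ξ h))) := by
    have heq : (fun t => fderiv ℝ (f t) (x t (ξ h)))
        = fun t => (fderiv ℝ F (t, x t (ξ h))).comp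
            (ContinuousLinearMap.inr ℝ ℝ (Fin n → ℝ)) := by
      funext t; exact hfderiv_eq t _
    rw [heq]
    exact Continuous.clm_comp
      (hF1.continuous.comp (continuous_id.prodMk hψc)) continuous_const
  -- uniqueness for the linearized equation
  have uniq : ∀ (y₁ y₂ : ℝ → (Fin n → ℝ)),
      (∀ t, HasDerivAt y₁ (fderiv ℝ (f t) (x t (ξ h)) (y₁ t)) t) →
      (∀ t, HasDerivAt y₂ (fderiv ℝ (f t) (x t (ξ h)) (y₂ t)) t) →
      y₁ 0 = y₂ 0 → ∀ t, y₁ t = y₂ t := by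
    intro y₁ y₂ h₁ h₂ h0 t
    have hud : ∀ s : ℝ, HasDerivAt (fun r => y₁ r - y₂ r)
        (fderiv ℝ (f s) (x s (ξ h)) (y₁ s - y₂ s)) s := by
      intro s
      have := (h₁ s).sub (h₂ s)
      rwa [← map_sub] at this
    have huc : Continuous (fun r => y₁ r - y₂ r) :=
      continuous_iff_continuousAt.2 fun s => (hud s).continuousAt
    rcases le_or_gt 0 t with hsign | hsign
    · obtain ⟨K0, hK0⟩ : ∃ K0, ∀ s ∈ Set.Icc (0:ℝ) t,
          ‖fderiv ℝ (f s) (x s (ξ h))‖ ≤ K0 :=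
        isCompact_Icc.exists_bound_of_continuousOn hAcont.continuousOn
      set K1 := max K0 0 with hK1
      have hgr := norm_le_gronwallBound_of_norm_deriv_right_le
        (f := fun r => y₁ r - y₂ r)
        (f' := fun s => fderiv ℝ (f s) (x s (ξ h)) (y₁ s - y₂ s))
        (δ := 0) (K := K1) (ε := 0) (a := 0) (b := t)
        huc.continuousOn (fun s _ => (hud s).hasDerivWithinAt)
        (by show ‖y₁ 0 - y₂ 0‖ ≤ 0; rw [h0, sub_self, norm_zero])
        ?_ t (right_mem_Icc.2 hsign)
      · rw [gronwallBound_ε0_δ0] at hgr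
        have : y₁ t - y₂ t = 0 := by
          have := norm_le_zero_iff.mp hgr
          exact this
        exact sub_eq_zero.mp this
      · intro s hs
        have hb := (hK0 s ⟨hs.1, hs.2.le⟩).trans (le_max_left K0 0)
        calc ‖fderiv ℝ (f s) (x s (ξ h)) (y₁ s - y₂ s)‖
            ≤ ‖fderiv ℝ (f s) (x s (ξ h))‖ * ‖y₁ s - y₂ s‖ :=
              ContinuousLinearMap.le_opNorm _ _
        _ ≤ K1 * ‖y₁ s - y₂ s‖ := mul_le_mul_of_nonneg_right hb (norm_nonneg _)
        _ ≤ K1 * ‖y₁ s - y₂ s‖ + 0 := by linarith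
    · obtain ⟨K0, hK0⟩ : ∃ K0, ∀ s ∈ Set.Icc t (0:ℝ),
          ‖fderiv ℝ (f s) (x s (ξ h))‖ ≤ K0 :=
        isCompact_Icc.exists_bound_of_continuousOn hAcont.continuousOn
      set K1 := max K0 0 with hK1
      have hrd : ∀ s : ℝ, HasDerivAt (fun r => y₁ (-r) - y₂ (-r))
          ((-1 : ℝ) • (fderiv ℝ (f (-s)) (x (-s) (ξ h)) (y₁ (-s) - y₂ (-s)))) s := by
        intro s
        have hneg : HasDerivAt (fun r : ℝ => -r) (-1 : ℝ) s := hasDerivAt_neg s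
        exact HasDerivAt.scomp_of_eq s (hud (-s)) hneg rfl
      have hrc : Continuous (fun r => y₁ (-r) - y₂ (-r)) :=
        continuous_iff_continuousAt.2 fun s => (hrd s).continuousAt
      have hgr := norm_le_gronwallBound_of_norm_deriv_right_le
        (f := fun r => y₁ (-r) - y₂ (-r))
        (f' := fun s => (-1 : ℝ) • (fderiv ℝ (f (-s)) (x (-s) (ξ h)) (y₁ (-s) - y₂ (-s))))
        (δ := 0) (K := K1) (ε := 0) (a := 0) (b := -t)
        hrc.continuousOn (fun s _ => (hrd s).hasDerivWithinAt)
        (by show ‖y₁ (-0) - y₂ (-0)‖ ≤ 0; rw [neg_zero, h0, sub_self, norm_zero])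
        ?_ (-t) (right_mem_Icc.2 (by linarith))
      · rw [gronwallBound_ε0_δ0] at hgr
        have h9 : y₁ (-(-t)) - y₂ (-(-t)) = 0 := norm_le_zero_iff.mp hgr
        rw [neg_neg] at h9
        exact sub_eq_zero.mp h9
      · intro s hs
        have hmem : -s ∈ Set.Icc t (0:ℝ) := ⟨by have := hs.2; linarith, by linarith [hs.1]⟩
        have hb := (hK0 (-s) hmem).trans (le_max_left K0 0)
        calc ‖(-1 : ℝ) • (fderiv ℝ (f (-s)) (x (-s) (ξ h)) (y₁ (-s) - y₂ (-s)))‖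
            = ‖fderiv ℝ (f (-s)) (x (-s) (ξ h)) (y₁ (-s) - y₂ (-s))‖ := by
              rw [norm_smul]; simp
        _ ≤ ‖fderiv ℝ (f (-s)) (x (-s) (ξ h))‖ * ‖y₁ (-s) - y₂ (-s)‖ :=
              ContinuousLinearMap.le_opNorm _ _
        _ ≤ K1 * ‖y₁ (-s) - y₂ (-s)‖ := mul_le_mul_of_nonneg_right hb (norm_nonneg _)
        _ ≤ K1 * ‖y₁ (-s) - y₂ (-s)‖ + 0 := by linarith
  -- periodicity
  have part2per : ∀ p : Fin n → ℝ, (W T h).mulVec p = p →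
      ∀ t, (W (t + T) h).mulVec p = (W t h).mulVec p := by
    intro p hp t
    have hAper : ∀ s : ℝ, fderiv ℝ (f (s + T)) (x (s + T) (ξ h))
        = fderiv ℝ (f s) (x s (ξ h)) := by
      intro s
      have hfs : f (s + T) = f s := funext (hfper s)
      rw [hfs, hxper h hh s]
    have h₁ : ∀ s : ℝ, HasDerivAt (fun r => (W (r + T) h).mulVec p)
        (fderiv ℝ (f s) (x s (ξ h)) ((W (s + T) h).mulVec p)) s := by
      intro s
      have hshift : HasDerivAt (fun r : ℝ => r + T) 1 s := (hasDerivAt_id s).add_const T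
      have hWs := HasDerivAt.scomp_of_eq s (hWsol h hh p (s + T)) hshift rfl
      rw [one_smul, hAper s] at hWs
      exact hWs
    have h0' : (fun r => (W (r + T) h).mulVec p) 0 = (fun r => (W r h).mulVec p) 0 := by
      show (W (0 + T) h).mulVec p = (W 0 h).mulVec p
      rw [zero_add, hp, hW0 h hh, Matrix.one_mulVec]
    exact uniq _ _ h₁ (hWsol h hh p) h0' t
  -- linear independence
  have part3 : LinearIndependent ℝ (fun i : Fin k => fun t : ℝ =>
      (W t h).mulVec (D (Pi.single i 1))) := by
    rw [Fintype.linearIndependent_iff]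
    intro g hg i
    have h0 := congrFun hg 0
    simp only [Finset.sum_apply, Pi.smul_apply, Pi.zero_apply, hW0 h hh,
      Matrix.one_mulVec] at h0
    set e : Fin k → (Fin k → ℝ) := fun j => Pi.single j 1 with he
    have hsum : D (∑ j, g j • e j) = 0 := by
      rw [map_sum]
      simp only [map_smul]
      exact h0
    have hz : (∑ j, g j • e j) = 0 := by
      apply hξrank h hh
      rw [hsum, map_zero]
    have hgeq : (∑ j, g j • e j) = g := by
      funext m
      simp [he, Finset.sum_apply, Pi.single_apply]
    rw [hgeq] at hz
    exact congrFun hz i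
  exact ⟨part1, fun c => ⟨hWsol h hh (D c), fun t => part2per (D c) (part1 c) t⟩, part3⟩
end

section
/- Suppose (A13) holds at z₀: there exist δ* > 0 and functions r, m : (0,δ*] → [0,∞) with r(δ) → 0 and m(δ) → 0 as δ → 0⁺, and for each δ ∈ (0,δ*] a Lebesgue measurable set M_δ ⊂ [0,T] with Lebesgue measure at most m(δ), such that for every t ∈ [0,T] \ M_δ, every z ∈ B_{2δ}(z₀) and every ε ∈ [0,δ], the map z ↦ g(t,z,ε) is differentiable at z with ‖D_zg(t,z,ε) − D_zg(t,z₀,0)‖ ≤ r(δ). Then (A9) holds at z₀: there exist δ** ∈ (0,δ*] and r' : (0,δ**] → [0,∞) with r'(δ) → 0 as δ → 0⁺, such that for each δ ∈ (0,δ**] there is a Lebesgue measurable set M'_δ ⊂ [0,T] with Lebesgue measure at most m(δ) and ‖g(t, z₁+ζ, ε) − g(t, z₁, 0) − g(t, z₂+ζ, ε) + g(t, z₂, 0)‖ ≤ r'(δ)‖z₁ − z₂‖ for all t ∈ [0,T] \ M'_δ, z₁, z₂ ∈ B_δ(z₀), ε ∈ [0,δ] and ζ ∈ B_δ(0). -/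
open scoped Topology

theorem stmt15
    (n : ℕ) (hn : 1 ≤ n) (T : ℝ) (hT : 0 < T)
    -- g continuous on ℝ × ℝⁿ × [0,1], locally uniformly Lipschitz in its second variable
    (g : ℝ → (Fin n → ℝ) → ℝ → (Fin n → ℝ))
    (hgcont : ContinuousOn (fun p : ℝ × (Fin n → ℝ) × ℝ => g p.1 p.2.1 p.2.2)
      (Set.univ ×ˢ Set.univ ×ˢ Set.Icc 0 1))
    (hglip : ∀ K' : Set (ℝ × (Fin n → ℝ) × ℝ), IsCompact K' →
      K' ⊆ Set.univ ×ˢ Set.univ ×ˢ Set.Icc 0 1 →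
      ∃ L > 0, ∀ t : ℝ, ∀ z₁ z₂ : Fin n → ℝ, ∀ e : ℝ,
        (t, z₁, e) ∈ K' → (t, z₂, e) ∈ K' → ‖g t z₁ e - g t z₂ e‖ ≤ L * ‖z₁ - z₂‖)
    (z₀ : Fin n → ℝ)
    -- (A13) at z₀
    (δs : ℝ) (hδs : 0 < δs)
    (r m : ℝ → ℝ)
    (hrm : ∀ δ ∈ Set.Ioc (0 : ℝ) δs, 0 ≤ r δ ∧ 0 ≤ m δ)
    (hrlim : Filter.Tendsto r (𝓝[>] (0 : ℝ)) (nhds 0))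
    (hmlim : Filter.Tendsto m (𝓝[>] (0 : ℝ)) (nhds 0))
    (Mδ : ℝ → Set ℝ)
    (hMδ : ∀ δ ∈ Set.Ioc (0 : ℝ) δs, MeasurableSet (Mδ δ) ∧ Mδ δ ⊆ Set.Icc 0 T ∧
      MeasureTheory.volume (Mδ δ) ≤ ENNReal.ofReal (m δ))
    (hA13 : ∀ δ ∈ Set.Ioc (0 : ℝ) δs, ∀ t ∈ Set.Icc (0 : ℝ) T \ Mδ δ,
      ∀ z ∈ Metric.ball z₀ (2 * δ), ∀ e ∈ Set.Icc (0 : ℝ) δ,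
        DifferentiableAt ℝ (fun w => g t w e) z ∧
        ‖fderiv ℝ (fun w => g t w e) z - fderiv ℝ (fun w => g t w 0) z₀‖ ≤ r δ) :
    -- (A9) at z₀
    ∃ δss : ℝ, (0 < δss ∧ δss ≤ δs) ∧ ∃ r' : ℝ → ℝ,
      (∀ δ ∈ Set.Ioc (0 : ℝ) δss, 0 ≤ r' δ) ∧
      Filter.Tendsto r' (𝓝[>] (0 : ℝ)) (nhds 0) ∧
      ∀ δ ∈ Set.Ioc (0 : ℝ) δss, ∃ M' : Set ℝ,
        MeasurableSet M' ∧ M' ⊆ Set.Icc 0 T ∧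
        MeasureTheory.volume M' ≤ ENNReal.ofReal (m δ) ∧
        ∀ t ∈ Set.Icc (0 : ℝ) T \ M',
          ∀ z₁ ∈ Metric.ball z₀ δ, ∀ z₂ ∈ Metric.ball z₀ δ,
          ∀ e ∈ Set.Icc (0 : ℝ) δ, ∀ ζ ∈ Metric.ball (0 : Fin n → ℝ) δ,
            ‖g t (z₁ + ζ) e - g t z₁ 0 - g t (z₂ + ζ) e + g t z₂ 0‖
              ≤ r' δ * ‖z₁ - z₂‖ := by

  refine ⟨δs, ⟨hδs, le_refl _⟩, fun δ => 2 * r δ, ?_, ?_, ?_⟩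
  · intro δ hδ
    have := (hrm δ hδ).1
    simp only []
    linarith
  · have : Filter.Tendsto (fun δ => 2 * r δ) (𝓝[>] (0:ℝ)) (nhds (2*0)) :=
      hrlim.const_mul 2
    simpa using this
  · intro δ hδ
    obtain ⟨hM1, hM2, hM3⟩ := hMδ δ hδ
    refine ⟨Mδ δ, hM1, hM2, hM3, ?_⟩
    intro t ht z₁ hz₁ z₂ hz₂ e he ζ hζ
    have hδ0 : 0 < δ := hδ.1
    have h0mem : (0:ℝ) ∈ Set.Icc (0:ℝ) δ := ⟨le_refl _, hδ0.le⟩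
    -- the difference map
    set φ : (Fin n → ℝ) → (Fin n → ℝ) := fun w => g t (w + ζ) e - g t w 0 with hφ
    set D₀ : (Fin n → ℝ) →L[ℝ] (Fin n → ℝ) := fderiv ℝ (fun w => g t w 0) z₀ with hD₀
    have key : ∀ x ∈ Metric.ball z₀ δ,
        HasFDerivWithinAt φ
          (fderiv ℝ (fun w => g t w e) (x + ζ) - fderiv ℝ (fun w => g t w 0) x)
          (Metric.ball z₀ δ) x ∧
        ‖fderiv ℝ (fun w => g t w e) (x + ζ) - fderiv ℝ (fun w => g t w 0) x‖
          ≤ 2 * r δ := by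
      intro x hx
      have hxball : x ∈ Metric.ball z₀ (2*δ) := by
        have := Metric.mem_ball.mp hx
        exact Metric.mem_ball.mpr (by linarith)
      have hxζball : x + ζ ∈ Metric.ball z₀ (2*δ) := by
        have h1 := Metric.mem_ball.mp hx
        have h2 := Metric.mem_ball.mp hζ
        rw [Metric.mem_ball]
        calc dist (x + ζ) z₀ ≤ dist (x + ζ) x + dist x z₀ := dist_triangle _ _ _
          _ = dist ζ 0 + dist x z₀ := by simp [dist_eq_norm]
          _ < 2 * δ := by linarith
      obtain ⟨hd1, hb1⟩ := hA13 δ hδ t ht (x + ζ) hxζball e he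
      obtain ⟨hd2, hb2⟩ := hA13 δ hδ t ht x hxball 0 h0mem
      have h1 : HasFDerivAt (fun w => g t (w + ζ) e)
          (fderiv ℝ (fun w => g t w e) (x + ζ)) x := by
        have hcomp := hd1.hasFDerivAt.comp x ((hasFDerivAt_id x).add_const ζ)
        simpa using hcomp
      have h2 : HasFDerivAt φ
          (fderiv ℝ (fun w => g t w e) (x + ζ) - fderiv ℝ (fun w => g t w 0) x) x :=
        h1.sub hd2.hasFDerivAt
      refine ⟨h2.hasFDerivWithinAt, ?_⟩
      have : fderiv ℝ (fun w => g t w e) (x + ζ) - fderiv ℝ (fun w => g t w 0) x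
          = (fderiv ℝ (fun w => g t w e) (x + ζ) - D₀)
            - (fderiv ℝ (fun w => g t w 0) x - D₀) := by abel
      rw [this]
      calc ‖(fderiv ℝ (fun w => g t w e) (x + ζ) - D₀)
            - (fderiv ℝ (fun w => g t w 0) x - D₀)‖
          ≤ ‖fderiv ℝ (fun w => g t w e) (x + ζ) - D₀‖
            + ‖fderiv ℝ (fun w => g t w 0) x - D₀‖ := norm_sub_le _ _
        _ ≤ r δ + r δ := add_le_add hb1 hb2
        _ = 2 * r δ := by ring
    have hconv : Convex ℝ (Metric.ball z₀ δ) := convex_ball z₀ δ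
    have := hconv.norm_image_sub_le_of_norm_hasFDerivWithin_le
      (fun x hx => (key x hx).1) (fun x hx => (key x hx).2) hz₂ hz₁
    have heq : g t (z₁ + ζ) e - g t z₁ 0 - g t (z₂ + ζ) e + g t z₂ 0
        = φ z₁ - φ z₂ := by simp [hφ]; abel
    rw [heq]
    exact this
end
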